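/- arXiv:1511.02972 — 4 statements merged into one kernel-verified Lean document; each statement's English description precedes it below -/
import Mathlib

section
/- Let C be a singly even self-dual binary code of length n with n divisible by 8, with doubly even subcode C₀ and cosets C₀, C₁, C₂, C₃ of C₀ in C₀⊥ where C = C₀ ∪ C₂. Then both C₀ ∪ C₁ and C₀ ∪ C₃ are doubly even self-dual codes of length n, and each intersects C in the subspace C₀ of dimension n/2 − 1 (i.e., each is a neighbor of C). -/
open Matrix

/-- The (Hamming) weight of a vector in 𝔽₂ⁿ. -/
def wt {n : ℕ} (x : Fin n → ZMod 2) : ℕ :=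
  (Finset.univ.filter (fun i => x i ≠ 0)).card

/-- The dual of a set of vectors, w.r.t. the standard inner product. -/
def dualSet {n : ℕ} (S : Set (Fin n → ZMod 2)) : Set (Fin n → ZMod 2) :=
  {x | ∀ y ∈ S, x ⬝ᵥ y = 0}

/-- The minimum non-zero weight among vectors of a set. -/
noncomputable def minWtSet {n : ℕ} (S : Set (Fin n → ZMod 2)) : ℕ :=
  sInf {w | ∃ x ∈ S, x ≠ 0 ∧ wt x = w}

/-- The minimum weight of a linear code. -/
noncomputable def minWt {n : ℕ} (C : Submodule (ZMod 2) (Fin n → ZMod 2)) : ℕ :=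
  minWtSet (C : Set (Fin n → ZMod 2))

/-- The minimum weight of the coset `x + C`. -/
noncomputable def cosetMinWt {n : ℕ} (C : Submodule (ZMod 2) (Fin n → ZMod 2))
    (x : Fin n → ZMod 2) : ℕ :=
  sInf {w | ∃ c ∈ C, wt (x + c) = w}

/-- The covering radius: the largest minimum weight of a coset. -/
noncomputable def coveringRadius {n : ℕ} (C : Submodule (ZMod 2) (Fin n → ZMod 2)) : ℕ :=
  sSup {r | ∃ x : Fin n → ZMod 2, cosetMinWt C x = r}

/-! ### Auxiliary material -/

section Aux

open Finset Complex

def supp {n : ℕ} (x : Fin n → ZMod 2) : Finset (Fin n) :=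
  Finset.univ.filter (fun i => x i ≠ 0)

lemma wt_eq {n : ℕ} (x : Fin n → ZMod 2) : wt x = (supp x).card := rfl

lemma zmod2_cases' (a : ZMod 2) : a = 0 ∨ a = 1 := by fin_cases a <;> [exact Or.inl rfl; exact Or.inr rfl]

lemma dot_eq_card {n : ℕ} (x y : Fin n → ZMod 2) :
    x ⬝ᵥ y = ((supp x ∩ supp y).card : ZMod 2) := by
  have h : ∀ i, x i * y i = if i ∈ supp x ∩ supp y then (1 : ZMod 2) else 0 := by
    intro i
    simp only [supp, Finset.mem_inter, Finset.mem_filter, Finset.mem_univ, true_and]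
    rcases zmod2_cases' (x i) with h1 | h1 <;> rcases zmod2_cases' (y i) with h2 | h2 <;>
      simp [h1, h2]
  have hd : x ⬝ᵥ y = ∑ i, x i * y i := rfl
  rw [hd, Finset.sum_congr rfl (fun i _ => h i)]
  rw [Finset.sum_ite_mem, Finset.univ_inter, Finset.sum_const, nsmul_eq_mul, mul_one]

lemma supp_add {n : ℕ} (x y : Fin n → ZMod 2) :
    supp (x + y) = symmDiff (supp x) (supp y) := by
  ext i
  simp only [supp, Finset.mem_symmDiff, Finset.mem_filter, Finset.mem_univ, true_and,
    Pi.add_apply]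
  rcases zmod2_cases' (x i) with h1 | h1 <;> rcases zmod2_cases' (y i) with h2 | h2 <;>
    simp [h1, h2] <;> decide

lemma card_symmDiff' {n : ℕ} (s t : Finset (Fin n)) :
    (symmDiff s t).card + 2 * (s ∩ t).card = s.card + t.card := by
  have h1 : symmDiff s t = (s ∪ t) \ (s ∩ t) := by
    ext i; simp only [Finset.mem_symmDiff, Finset.mem_union, Finset.mem_sdiff,
      Finset.mem_inter]; tauto
  have h2 : (s ∩ t) ⊆ (s ∪ t) := Finset.inter_subset_union
  have h3 := Finset.card_sdiff_add_card_eq_card h2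
  have h4 := Finset.card_union_add_card_inter s t
  rw [h1]
  omega

lemma wt_add' {n : ℕ} (x y : Fin n → ZMod 2) :
    wt (x + y) + 2 * (supp x ∩ supp y).card = wt x + wt y := by
  rw [wt_eq, wt_eq, wt_eq, supp_add]; exact card_symmDiff' _ _

lemma dot_zero_even {n : ℕ} {x y : Fin n → ZMod 2} (h : x ⬝ᵥ y = 0) :
    2 ∣ (supp x ∩ supp y).card := by
  rw [dot_eq_card] at h
  exact (ZMod.natCast_eq_zero_iff _ 2).mp h

lemma wt_add_mod4 {n : ℕ} {x y : Fin n → ZMod 2} (h : x ⬝ᵥ y = 0) (h4 : 4 ∣ wt y) :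
    wt (x + y) % 4 = wt x % 4 := by
  have h1 := wt_add' x y
  obtain ⟨k, hk⟩ := dot_zero_even h
  omega

lemma dot_self' {n : ℕ} (x : Fin n → ZMod 2) : x ⬝ᵥ x = (wt x : ZMod 2) := by
  rw [dot_eq_card, Finset.inter_self, wt_eq]

lemma wt_le {n : ℕ} (x : Fin n → ZMod 2) : wt x ≤ n := by
  have := Finset.card_filter_le Finset.univ (fun i => x i ≠ 0)
  simpa [wt] using this

noncomputable def gchar (a : ZMod 2) : ℂ := if a = 0 then 1 else -1

lemma gchar_zero : gchar 0 = 1 := rfl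

lemma gchar_add (a b : ZMod 2) : gchar (a + b) = gchar a * gchar b := by
  rcases zmod2_cases' a with h | h <;> rcases zmod2_cases' b with h' | h' <;>
    subst h <;> subst h' <;>
    simp [gchar, show (1 + 1 : ZMod 2) = 0 from by decide]

lemma gchar_sum {ι : Type*} (s : Finset ι) (f : ι → ZMod 2) :
    gchar (∑ i ∈ s, f i) = ∏ i ∈ s, gchar (f i) := by
  induction s using Finset.cons_induction with
  | empty => simp [gchar]
  | cons a s ha ih => rw [Finset.sum_cons, Finset.prod_cons, gchar_add, ih]

lemma I_pow_mod4 (w : ℕ) : Complex.I ^ w = Complex.I ^ (w % 4) := by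
  conv_lhs => rw [← Nat.div_add_mod w 4]
  rw [pow_add, pow_mul, Complex.I_pow_four, one_pow, one_mul]

lemma I_pow_of_dvd4 {w : ℕ} (h : 4 ∣ w) : Complex.I ^ w = 1 := by
  rw [I_pow_mod4, Nat.mod_eq_zero_of_dvd h, pow_zero]

lemma I_pow_eq_one_iff {w : ℕ} (h : Complex.I ^ w = 1) : 4 ∣ w := by
  rw [I_pow_mod4] at h
  have h4 : w % 4 < 4 := Nat.mod_lt _ (by norm_num)
  interval_cases hw : w % 4
  · omega
  · exfalso; rw [pow_one] at h
    have := congrArg Complex.im h; simp at this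
  · exfalso; rw [pow_two, Complex.I_mul_I] at h; norm_num at h
  · exfalso; rw [pow_succ, pow_two, Complex.I_mul_I, neg_one_mul] at h
    have := congrArg Complex.im h; simp at this

lemma zmod2_sum (f : ZMod 2 → ℂ) : ∑ b : ZMod 2, f b = f 0 + f 1 := by
  have h : (Finset.univ : Finset (ZMod 2)) = {0, 1} := by decide
  rw [h, Finset.sum_insert (by decide), Finset.sum_singleton]

lemma I_pow_wt {n : ℕ} (x : Fin n → ZMod 2) :
    (Complex.I) ^ wt x = ∏ i, (if x i = 0 then (1:ℂ) else Complex.I) := by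
  rw [Finset.prod_ite, Finset.prod_const, Finset.prod_const, one_pow, one_mul, wt]

lemma sum_I_gchar {n : ℕ} (h : Fin n → ZMod 2) :
    ∑ x : Fin n → ZMod 2, Complex.I ^ wt x * gchar (x ⬝ᵥ h)
      = (1 + Complex.I) ^ (n - wt h) * (1 - Complex.I) ^ (wt h) := by
  have step1 : ∀ x : Fin n → ZMod 2, Complex.I ^ wt x * gchar (x ⬝ᵥ h)
      = ∏ i, ((if x i = 0 then (1:ℂ) else Complex.I) * gchar (x i * h i)) := by
    intro x
    rw [Finset.prod_mul_distrib, ← I_pow_wt]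
    congr 1
    exact gchar_sum Finset.univ (fun i => x i * h i)
  rw [Finset.sum_congr rfl (fun x _ => step1 x)]
  rw [← Fintype.prod_sum (f := fun (i : Fin n) (b : ZMod 2) =>
    (if b = 0 then (1:ℂ) else Complex.I) * gchar (b * h i))]
  have step2 : ∀ i : Fin n, (∑ b : ZMod 2, (if b = 0 then (1:ℂ) else Complex.I) * gchar (b * h i))
      = if h i = 0 then 1 + Complex.I else 1 - Complex.I := by
    intro i
    rw [zmod2_sum (fun b => (if b = 0 then (1:ℂ) else Complex.I) * gchar (b * h i))]
    rcases zmod2_cases' (h i) with hh | hh <;>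
      simp [hh, gchar, sub_eq_add_neg]
  rw [Finset.prod_congr rfl (fun i _ => step2 i), Finset.prod_ite, Finset.prod_const,
    Finset.prod_const]
  have hcard : (Finset.univ.filter (fun i => h i = 0)).card = n - wt h := by
    have := Finset.card_filter_add_card_filter_not (s := Finset.univ)
      (p := fun i : Fin n => h i = 0)
    simp only [Finset.card_univ, Fintype.card_fin] at this
    have hwt : (Finset.univ.filter (fun i => ¬ h i = 0)).card = wt h := rfl
    omega
  have hcard2 : (Finset.univ.filter (fun i => ¬ h i = 0)).card = wt h := rfl
  rw [hcard, hcard2]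

lemma one_sub_I_pow {w : ℕ} (h4 : 4 ∣ w) :
    (1 - Complex.I) ^ w = (1 + Complex.I) ^ w := by
  have key : (1 - Complex.I) = (1 + Complex.I) * (-Complex.I) := by
    linear_combination Complex.I_sq
  rw [key, mul_pow]
  have h1 : (-Complex.I) ^ w = 1 := by
    rw [neg_pow, I_pow_of_dvd4 h4, mul_one]
    obtain ⟨k, rfl⟩ := h4
    rw [pow_mul]; norm_num
  rw [h1, mul_one]

lemma one_add_I_pow {n : ℕ} (h8 : 8 ∣ n) : (1 + Complex.I) ^ n = (2:ℂ) ^ (n / 2) := by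
  obtain ⟨m, rfl⟩ := h8
  have h2 : (1 + Complex.I) ^ 8 = 16 := by
    have hsq : (1 + Complex.I) ^ 2 = 2 * Complex.I := by
      linear_combination Complex.I_sq
    calc (1 + Complex.I) ^ 8 = ((1 + Complex.I) ^ 2) ^ 4 := by ring
    _ = (2 * Complex.I) ^ 4 := by rw [hsq]
    _ = 16 := by rw [mul_pow, Complex.I_pow_four]; norm_num
  rw [pow_mul, h2, show 8 * m / 2 = 4 * m from by omega, pow_mul]
  norm_num

variable {n : ℕ}

noncomputable instance fsd : ∀ S : Set (Fin n → ZMod 2), Fintype S :=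
  fun S => Set.Finite.fintype (Set.toFinite S)

/-- finset of a set of vectors -/
noncomputable def fs (S : Set (Fin n → ZMod 2)) : Finset (Fin n → ZMod 2) :=
  Set.toFinset S

lemma mem_fs {S : Set (Fin n → ZMod 2)} {x} : x ∈ fs S ↔ x ∈ S := Set.mem_toFinset

lemma fs_union (S T : Set (Fin n → ZMod 2)) : fs (S ∪ T) = fs S ∪ fs T := by
  ext x; simp [mem_fs]

lemma fs_disj {S T : Set (Fin n → ZMod 2)} (h : Disjoint S T) : Disjoint (fs S) (fs T) := by
  rw [Finset.disjoint_left]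
  intro a ha hb
  exact Set.disjoint_left.mp h (mem_fs.mp ha) (mem_fs.mp hb)

lemma char_orth (W : Submodule (ZMod 2) (Fin n → ZMod 2)) (x : Fin n → ZMod 2) :
    ∑ h ∈ fs (W : Set (Fin n → ZMod 2)), gchar (x ⬝ᵥ h)
      = if x ∈ fs (dualSet (W : Set (Fin n → ZMod 2)))
          then ((fs (W : Set (Fin n → ZMod 2))).card : ℂ) else 0 := by
  split_ifs with hx
  · rw [mem_fs] at hx
    rw [Finset.sum_congr rfl (fun h hh => by rw [hx h (mem_fs.mp hh), gchar_zero]),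
      Finset.sum_const, nsmul_eq_mul, mul_one]
  · rw [mem_fs] at hx
    simp only [dualSet, Set.mem_setOf_eq, not_forall] at hx
    obtain ⟨h₀, hh₀, hne⟩ := hx
    have hdot : x ⬝ᵥ h₀ = 1 := (zmod2_cases' _).resolve_left hne
    have key : ∑ h ∈ fs (W : Set (Fin n → ZMod 2)), gchar (x ⬝ᵥ h)
        = ∑ h ∈ fs (W : Set (Fin n → ZMod 2)), (- gchar (x ⬝ᵥ h)) := by
      apply Finset.sum_nbij' (fun h => h + h₀) (fun h => h + h₀)
      · intro a ha; rw [mem_fs] at ha ⊢; exact W.add_mem ha hh₀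
      · intro a ha; rw [mem_fs] at ha ⊢; exact W.add_mem ha hh₀
      · intro a _; funext i
        simp only [Pi.add_apply]
        rw [add_assoc, CharTwo.add_self_eq_zero, add_zero]
      · intro a _; funext i
        simp only [Pi.add_apply]
        rw [add_assoc, CharTwo.add_self_eq_zero, add_zero]
      · intro a _
        rw [dotProduct_add, gchar_add, hdot]
        simp [gchar]
    have h2 : (2:ℂ) * ∑ h ∈ fs (W : Set (Fin n → ZMod 2)), gchar (x ⬝ᵥ h) = 0 := by
      rw [Finset.sum_neg_distrib] at key
      linear_combination key
    have h3 := mul_eq_zero.mp h2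
    simp only [OfNat.ofNat_ne_zero, false_or] at h3
    exact h3

lemma gauss_sum (h8 : 8 ∣ n) (W : Submodule (ZMod 2) (Fin n → ZMod 2))
    (hW : ∀ h ∈ W, 4 ∣ wt h) :
    ∑ x ∈ fs (dualSet (W : Set (Fin n → ZMod 2))), Complex.I ^ wt x = (2:ℂ) ^ (n / 2) := by
  set Wf := fs (W : Set (Fin n → ZMod 2)) with hWf
  set Df := fs (dualSet (W : Set (Fin n → ZMod 2))) with hDf
  have key : ∑ x : Fin n → ZMod 2, Complex.I ^ wt x * (∑ h ∈ Wf, gchar (x ⬝ᵥ h))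
      = (Wf.card : ℂ) * ∑ x ∈ Df, Complex.I ^ wt x := by
    rw [Finset.sum_congr rfl (fun x _ => by rw [char_orth W x, mul_ite, mul_zero, ← hWf, ← hDf])]
    rw [Finset.sum_ite_mem, Finset.univ_inter, Finset.mul_sum]
    exact Finset.sum_congr rfl (fun x _ => mul_comm _ _)
  have key2 : ∑ x : Fin n → ZMod 2, Complex.I ^ wt x * (∑ h ∈ Wf, gchar (x ⬝ᵥ h))
      = (Wf.card : ℂ) * (2:ℂ) ^ (n / 2) := by
    rw [Finset.sum_congr rfl (fun x _ => Finset.mul_sum _ _ _), Finset.sum_comm]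
    have inner : ∀ h ∈ Wf, ∑ x : Fin n → ZMod 2, Complex.I ^ wt x * gchar (x ⬝ᵥ h)
        = (2:ℂ) ^ (n / 2) := by
      intro h hh
      rw [sum_I_gchar h, one_sub_I_pow (hW h (mem_fs.mp hh)), ← pow_add]
      rw [show n - wt h + wt h = n from by have := wt_le h; omega, one_add_I_pow h8]
    rw [Finset.sum_congr rfl inner, Finset.sum_const, nsmul_eq_mul]
  have hcard : (0:ℕ) < Wf.card := Finset.card_pos.mpr ⟨0, mem_fs.mpr W.zero_mem⟩
  have hne : (Wf.card : ℂ) ≠ 0 := Nat.cast_ne_zero.mpr (by omega)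
  rw [key] at key2
  exact mul_left_cancel₀ hne key2

def dualSub (W : Submodule (ZMod 2) (Fin n → ZMod 2)) : Submodule (ZMod 2) (Fin n → ZMod 2) where
  carrier := dualSet (W : Set (Fin n → ZMod 2))
  add_mem' := fun hx hy y hy' => by
    rw [add_dotProduct, hx y hy', hy y hy', add_zero]
  zero_mem' := fun y _ => zero_dotProduct y
  smul_mem' := fun c x hx y hy => by
    rw [smul_dotProduct, hx y hy, smul_zero]

lemma coe_dualSub (W : Submodule (ZMod 2) (Fin n → ZMod 2)) :
    (dualSub W : Set (Fin n → ZMod 2)) = dualSet (W : Set (Fin n → ZMod 2)) := rfl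

noncomputable def dpl : (Fin n → ZMod 2) →ₗ[ZMod 2] Module.Dual (ZMod 2) (Fin n → ZMod 2) where
  toFun x :=
    { toFun := fun y => x ⬝ᵥ y
      map_add' := fun a b => dotProduct_add x a b
      map_smul' := fun c a => dotProduct_smul c x a }
  map_add' a b := LinearMap.ext fun y => add_dotProduct a b y
  map_smul' c a := LinearMap.ext fun y => smul_dotProduct c a y

noncomputable def dple : (Fin n → ZMod 2) ≃ₗ[ZMod 2] Module.Dual (ZMod 2) (Fin n → ZMod 2) :=
  LinearMap.linearEquivOfInjective dpl
    (by
      rw [← LinearMap.ker_eq_bot, LinearMap.ker_eq_bot']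
      intro x hx
      apply dotProduct_eq_zero x
      intro w
      have h : dpl x w = (0 : Module.Dual (ZMod 2) (Fin n → ZMod 2)) w := by rw [hx]
      exact h)
    (Subspace.dual_finrank_eq).symm

lemma finrank_dualSub (W : Submodule (ZMod 2) (Fin n → ZMod 2)) :
    Module.finrank (ZMod 2) W + Module.finrank (ZMod 2) (dualSub W) = n := by
  have hiso : dualSub W = (W.map (dple (n := n)).toLinearMap).dualCoannihilator := by
    ext x
    simp only [Submodule.mem_dualCoannihilator, Submodule.mem_map]
    constructor
    · rintro hx φ ⟨w, hw, rfl⟩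
      show dpl w x = 0
      show w ⬝ᵥ x = 0
      rw [dotProduct_comm]
      exact hx w hw
    · intro hφ y hy
      have h := hφ (dple y) ⟨y, hy, rfl⟩
      rw [dotProduct_comm]
      exact h
  have h1 := Subspace.finrank_add_finrank_dualCoannihilator_eq
    (W.map (dple (n := n)).toLinearMap)
  rw [← hiso] at h1
  have h2 : Module.finrank (ZMod 2) (W.map (dple (n := n)).toLinearMap)
      = Module.finrank (ZMod 2) W := LinearEquiv.finrank_map_eq dple W
  have h4 : Module.finrank (ZMod 2) (Fin n → ZMod 2) = n := by
    rw [Module.finrank_fintype_fun_eq_card, Fintype.card_fin]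
  omega

lemma card_fs_submodule (W : Submodule (ZMod 2) (Fin n → ZMod 2)) :
    (fs (W : Set (Fin n → ZMod 2))).card = 2 ^ Module.finrank (ZMod 2) W := by
  classical
  haveI : Fintype W := Fintype.ofFinite _
  rw [fs, ← Set.ncard_eq_toFinset_card', ← Nat.card_coe_set_eq, SetLike.coe_sort_coe,
    Nat.card_eq_fintype_card, Module.card_eq_pow_finrank (K := ZMod 2), ZMod.card]

lemma card_fs_coset (v : Fin n → ZMod 2) (S : Set (Fin n → ZMod 2)) :
    (fs ((v + ·) '' S)).card = (fs S).card := by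
  apply Finset.card_bij' (fun a _ => v + a) (fun a _ => v + a)
  · intro a ha
    rw [mem_fs] at ha ⊢
    obtain ⟨c, hc, rfl⟩ := ha
    have h : v + (v + c) = c := by
      funext i
      simp only [Pi.add_apply]
      rw [← add_assoc, CharTwo.add_self_eq_zero, zero_add]
    rw [h]; exact hc
  · intro a ha
    rw [mem_fs] at ha ⊢
    exact ⟨a, ha, rfl⟩
  · intro a _
    funext i
    simp only [Pi.add_apply]
    rw [← add_assoc, CharTwo.add_self_eq_zero, zero_add]
  · intro a _
    funext i
    simp only [Pi.add_apply]
    rw [← add_assoc, CharTwo.add_self_eq_zero, zero_add]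

lemma unit_sum_two {a b : ℂ} (ha : ‖a‖ = 1) (hb : ‖b‖ = 1)
    (hab : a + b = 2) : a = 1 ∧ b = 1 := by
  have hra : a.re ≤ 1 := by have h := Complex.re_le_norm a; rw [ha] at h; exact h
  have hrb : b.re ≤ 1 := by have h := Complex.re_le_norm b; rw [hb] at h; exact h
  have hsum : a.re + b.re = 2 := by
    have h := congrArg Complex.re hab; simpa using h
  have h1 : a.re = 1 := by linarith
  have h2 : b.re = 1 := by linarith
  have hna : Complex.normSq a = 1 := by
    rw [← Complex.sq_norm, ha]; norm_num
  have hnb : Complex.normSq b = 1 := by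
    rw [← Complex.sq_norm, hb]; norm_num
  rw [Complex.normSq_apply, h1] at hna
  rw [Complex.normSq_apply, h2] at hnb
  have hia : a.im = 0 := by nlinarith [sq_nonneg a.im]
  have hib : b.im = 0 := by nlinarith [sq_nonneg b.im]
  constructor
  · exact Complex.ext (by simp [h1]) (by simp [hia])
  · exact Complex.ext (by simp [h2]) (by simp [hib])

/-- The extension of `C₀` by a coset representative `v`. -/
def extCode (W : Submodule (ZMod 2) (Fin n → ZMod 2)) (v : Fin n → ZMod 2) :
    Submodule (ZMod 2) (Fin n → ZMod 2) where
  carrier := (W : Set (Fin n → ZMod 2)) ∪ (v + ·) '' (W : Set (Fin n → ZMod 2))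
  add_mem' := by
    rintro a b (ha | ⟨c, hc, rfl⟩) (hb | ⟨c', hc', rfl⟩)
    · exact Or.inl (W.add_mem ha hb)
    · refine Or.inr ⟨c' + a, W.add_mem hc' ha, ?_⟩
      funext i; simp only [Pi.add_apply]; ring
    · refine Or.inr ⟨c + b, W.add_mem hc hb, ?_⟩
      funext i; simp only [Pi.add_apply]; ring
    · refine Or.inl ?_
      have h : (v + c) + (v + c') = c + c' := by
        funext i
        simp only [Pi.add_apply]
        have hvv : v i + v i = 0 := CharTwo.add_self_eq_zero _
        calc v i + c i + (v i + c' i) = (v i + v i) + (c i + c' i) := by ring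
        _ = c i + c' i := by rw [hvv, zero_add]
      rw [h]
      exact W.add_mem hc hc'
  zero_mem' := Or.inl W.zero_mem
  smul_mem' := by
    intro c x hx
    rcases zmod2_cases' c with h | h
    · subst h; rw [zero_smul]; exact Or.inl W.zero_mem
    · subst h; rw [one_smul]; exact hx

lemma coe_extCode (W : Submodule (ZMod 2) (Fin n → ZMod 2)) (v : Fin n → ZMod 2) :
    (extCode W v : Set (Fin n → ZMod 2))
      = (W : Set (Fin n → ZMod 2)) ∪ (v + ·) '' (W : Set (Fin n → ZMod 2)) := rfl

end Aux

theorem stmt4 {n : ℕ} (h8 : 8 ∣ n) (C C₀ : Submodule (ZMod 2) (Fin n → ZMod 2))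
    (hsd : (C : Set (Fin n → ZMod 2)) = dualSet (C : Set (Fin n → ZMod 2)))
    (hse : ∃ x ∈ C, wt x % 4 = 2)
    (hC₀ : (C₀ : Set (Fin n → ZMod 2)) = {x | x ∈ C ∧ 4 ∣ wt x})
    (C₁ C₂ C₃ : Set (Fin n → ZMod 2))
    (h₁ : ∃ v, C₁ = (v + ·) '' (C₀ : Set (Fin n → ZMod 2)))
    (h₂ : ∃ v, C₂ = (v + ·) '' (C₀ : Set (Fin n → ZMod 2)))
    (h₃ : ∃ v, C₃ = (v + ·) '' (C₀ : Set (Fin n → ZMod 2)))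
    (hdisj : List.Pairwise Disjoint [(C₀ : Set (Fin n → ZMod 2)), C₁, C₂, C₃])
    (hpart : dualSet (C₀ : Set (Fin n → ZMod 2)) = ↑C₀ ∪ C₁ ∪ C₂ ∪ C₃)
    (hC : (C : Set (Fin n → ZMod 2)) = ↑C₀ ∪ C₂)
    (hS : dualSet (C₀ : Set (Fin n → ZMod 2)) \ ↑C = C₁ ∪ C₃) :
    ∃ D₁ D₃ : Submodule (ZMod 2) (Fin n → ZMod 2),
      (D₁ : Set (Fin n → ZMod 2)) = ↑C₀ ∪ C₁ ∧
      (D₃ : Set (Fin n → ZMod 2)) = ↑C₀ ∪ C₃ ∧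
      (D₁ : Set (Fin n → ZMod 2)) = dualSet (D₁ : Set (Fin n → ZMod 2)) ∧
      (∀ x ∈ D₁, 4 ∣ wt x) ∧
      (D₃ : Set (Fin n → ZMod 2)) = dualSet (D₃ : Set (Fin n → ZMod 2)) ∧
      (∀ x ∈ D₃, 4 ∣ wt x) ∧
      (D₁ : Set (Fin n → ZMod 2)) ∩ ↑C = ↑C₀ ∧
      (D₃ : Set (Fin n → ZMod 2)) ∩ ↑C = ↑C₀ ∧
      Module.finrank (ZMod 2) ↥C₀ = n / 2 - 1 := by
  classical
  obtain ⟨v₁, hC₁⟩ := h₁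
  obtain ⟨v₂, hC₂⟩ := h₂
  obtain ⟨v₃, hC₃⟩ := h₃
  -- disjointness
  simp only [List.pairwise_cons, List.mem_cons, List.mem_singleton, List.not_mem_nil,
    List.Pairwise.nil, forall_eq_or_imp, forall_eq] at hdisj
  obtain ⟨⟨d01, d02, d03⟩, ⟨d12, d13⟩, d23, -⟩ := hdisj
  have d03 := d03.1
  have d13 := d13.1
  have d23 := d23.1
  -- basic membership facts
  have hC₀C : ∀ x ∈ C₀, x ∈ C := by
    intro x hx
    have h := (Set.ext_iff.mp hC₀ x).mp hx
    exact h.1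
  have hC₀wt : ∀ x ∈ C₀, 4 ∣ wt x := by
    intro x hx
    exact ((Set.ext_iff.mp hC₀ x).mp hx).2
  have hmemC₀ : ∀ x, x ∈ C → 4 ∣ wt x → x ∈ C₀ := by
    intro x h1 h2
    exact (Set.ext_iff.mp hC₀ x).mpr ⟨h1, h2⟩
  have hCsubdual : (C : Set (Fin n → ZMod 2)) ⊆ dualSet (C₀ : Set (Fin n → ZMod 2)) := by
    rw [hsd]
    intro x hx y hy
    exact hx y (hC₀C y hy)
  have hC₀dd : ∀ c ∈ C₀, ∀ y ∈ C₀, c ⬝ᵥ y = 0 := by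
    intro c hc y hy
    exact hCsubdual (hC₀C c hc) y hy
  have hsub1 : C₁ ⊆ dualSet (C₀ : Set (Fin n → ZMod 2)) := by
    rw [hpart]; intro x hx; exact Or.inl (Or.inl (Or.inr hx))
  have hsub2 : C₂ ⊆ dualSet (C₀ : Set (Fin n → ZMod 2)) := by
    rw [hpart]; intro x hx; exact Or.inl (Or.inr hx)
  have hsub3 : C₃ ⊆ dualSet (C₀ : Set (Fin n → ZMod 2)) := by
    rw [hpart]; intro x hx; exact Or.inr hx
  have hv₁ : v₁ ∈ C₁ := by rw [hC₁]; exact ⟨0, C₀.zero_mem, add_zero v₁⟩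
  have hv₂ : v₂ ∈ C₂ := by rw [hC₂]; exact ⟨0, C₀.zero_mem, add_zero v₂⟩
  have hv₃ : v₃ ∈ C₃ := by rw [hC₃]; exact ⟨0, C₀.zero_mem, add_zero v₃⟩
  have hv₁d : v₁ ∈ dualSet (C₀ : Set (Fin n → ZMod 2)) := hsub1 hv₁
  have hv₂d : v₂ ∈ dualSet (C₀ : Set (Fin n → ZMod 2)) := hsub2 hv₂
  have hv₃d : v₃ ∈ dualSet (C₀ : Set (Fin n → ZMod 2)) := hsub3 hv₃
  have hrep₁ : ∀ x ∈ C₁, ∃ c, c ∈ C₀ ∧ x = v₁ + c := by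
    rw [hC₁]; rintro x ⟨c, hc, rfl⟩; exact ⟨c, hc, rfl⟩
  have hrep₂ : ∀ x ∈ C₂, ∃ c, c ∈ C₀ ∧ x = v₂ + c := by
    rw [hC₂]; rintro x ⟨c, hc, rfl⟩; exact ⟨c, hc, rfl⟩
  have hrep₃ : ∀ x ∈ C₃, ∃ c, c ∈ C₀ ∧ x = v₃ + c := by
    rw [hC₃]; rintro x ⟨c, hc, rfl⟩; exact ⟨c, hc, rfl⟩
  -- weight congruence along cosets
  have wconst : ∀ v ∈ dualSet (C₀ : Set (Fin n → ZMod 2)), ∀ c ∈ C₀,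
      wt (v + c) % 4 = wt v % 4 := by
    intro v hv c hc
    exact wt_add_mod4 (hv c hc) (hC₀wt c hc)
  have dconst : ∀ u ∈ dualSet (C₀ : Set (Fin n → ZMod 2)), ∀ c ∈ C₀, ∀ x : Fin n → ZMod 2,
      u ⬝ᵥ (x + c) = u ⬝ᵥ x := by
    intro u hu c hc x
    rw [dotProduct_add, hu c hc, add_zero]
  -- the singly even codeword sits in C₂
  obtain ⟨xh, hxhC, hxh2⟩ := hse
  have hxhC₂ : xh ∈ C₂ := by
    have h := hC ▸ (by exact hxhC : xh ∈ (C : Set (Fin n → ZMod 2)))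
    rcases h with h | h
    · exfalso
      have := hC₀wt xh h
      omega
    · exact h
  have hv₂mod : wt v₂ % 4 = 2 := by
    obtain ⟨c, hc, hx⟩ := hrep₂ xh hxhC₂
    have h := wconst v₂ hv₂d c hc
    rw [← hx] at h
    omega
  have hn8 : 8 ≤ n := by
    have h1 : wt xh ≤ n := wt_le xh
    have h2 : 0 < n := by omega
    exact Nat.le_of_dvd h2 h8
  -- elements of the shadow pair to 1 with everything in C₂
  have hnotC : ∀ v ∈ C₁ ∪ C₃, v ∉ (C : Set (Fin n → ZMod 2)) := by
    rw [← hS]; exact fun v hv => hv.2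
  have dual_one : ∀ v ∈ dualSet (C₀ : Set (Fin n → ZMod 2)),
      v ∉ (C : Set (Fin n → ZMod 2)) → v ⬝ᵥ v₂ = 1 := by
    intro v hv hvC
    by_contra h0
    have hv2 : v ⬝ᵥ v₂ = 0 := (zmod2_cases' _).resolve_right h0
    apply hvC
    rw [hsd]
    intro y hy
    have hy' : y ∈ ((C₀ : Set (Fin n → ZMod 2)) ∪ C₂) := hC ▸ hy
    rcases hy' with h | h
    · exact hv y h
    · obtain ⟨c, hc, rfl⟩ := hrep₂ y h
      rw [dconst v hv c hc v₂, hv2]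
  have hv₁C : v₁ ∉ (C : Set (Fin n → ZMod 2)) := hnotC v₁ (Or.inl hv₁)
  have hv₃C : v₃ ∉ (C : Set (Fin n → ZMod 2)) := hnotC v₃ (Or.inr hv₃)
  have hone₁ : ∀ x ∈ C₂, v₁ ⬝ᵥ x = 1 := by
    intro x hx
    obtain ⟨c, hc, rfl⟩ := hrep₂ x hx
    rw [dconst v₁ hv₁d c hc v₂]
    exact dual_one v₁ hv₁d hv₁C
  have hone₃ : ∀ x ∈ C₂, v₃ ⬝ᵥ x = 1 := by
    intro x hx
    obtain ⟨c, hc, rfl⟩ := hrep₂ x hx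
    rw [dconst v₃ hv₃d c hc v₂]
    exact dual_one v₃ hv₃d hv₃C
  -- dimension of C and C₀
  have hCC : C = dualSub C := SetLike.ext' (by rw [coe_dualSub, ← hsd])
  have hfr := finrank_dualSub C
  rw [← hCC] at hfr
  have hfrC : Module.finrank (ZMod 2) C = n / 2 := by omega
  have hcC : (fs ((C : Set (Fin n → ZMod 2)))).card = 2 ^ (n / 2) := by
    rw [card_fs_submodule, hfrC]
  have hc2 : (fs C₂).card = (fs ((C₀ : Set (Fin n → ZMod 2)))).card := by
    rw [hC₂, card_fs_coset]
  have hc1 : (fs C₁).card = (fs ((C₀ : Set (Fin n → ZMod 2)))).card := by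
    rw [hC₁, card_fs_coset]
  have hc3 : (fs C₃).card = (fs ((C₀ : Set (Fin n → ZMod 2)))).card := by
    rw [hC₃, card_fs_coset]
  have hsplitC : (fs ((C : Set (Fin n → ZMod 2)))).card
      = (fs ((C₀ : Set (Fin n → ZMod 2)))).card + (fs C₂).card := by
    rw [hC, fs_union, Finset.card_union_of_disjoint (fs_disj d02)]
  have hcard0 : (fs ((C₀ : Set (Fin n → ZMod 2)))).card = 2 ^ Module.finrank (ZMod 2) C₀ :=
    card_fs_submodule C₀
  have hfrC₀ : Module.finrank (ZMod 2) C₀ = n / 2 - 1 := by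
    have hkey : 2 ^ (Module.finrank (ZMod 2) C₀ + 1) = 2 ^ (n / 2) := by
      rw [pow_succ]
      omega
    have := Nat.pow_right_injective (le_refl 2) hkey
    omega
  have hcard0' : (fs ((C₀ : Set (Fin n → ZMod 2)))).card = 2 ^ (n / 2 - 1) := by
    rw [hcard0, hfrC₀]
  -- the Gauss sum
  have hZ := gauss_sum h8 C₀ hC₀wt
  rw [hpart, fs_union, fs_union, fs_union] at hZ
  have D3' : Disjoint (fs ((C₀ : Set (Fin n → ZMod 2))) ∪ fs C₁ ∪ fs C₂) (fs C₃) :=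
    Finset.disjoint_union_left.mpr
      ⟨Finset.disjoint_union_left.mpr ⟨fs_disj d03, fs_disj d13⟩, fs_disj d23⟩
  have D2' : Disjoint (fs ((C₀ : Set (Fin n → ZMod 2))) ∪ fs C₁) (fs C₂) :=
    Finset.disjoint_union_left.mpr ⟨fs_disj d02, fs_disj d12⟩
  have D1' : Disjoint (fs ((C₀ : Set (Fin n → ZMod 2)))) (fs C₁) := fs_disj d01
  rw [Finset.sum_union D3', Finset.sum_union D2', Finset.sum_union D1'] at hZ
  have S0 : ∑ x ∈ fs ((C₀ : Set (Fin n → ZMod 2))), Complex.I ^ wt x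
      = ((fs ((C₀ : Set (Fin n → ZMod 2)))).card : ℂ) := by
    rw [Finset.sum_congr rfl (fun x hx => I_pow_of_dvd4 (hC₀wt x (mem_fs.mp hx))),
      Finset.sum_const, nsmul_eq_mul, mul_one]
  have S2 : ∑ x ∈ fs C₂, Complex.I ^ wt x
      = -((fs ((C₀ : Set (Fin n → ZMod 2)))).card : ℂ) := by
    have hterm : ∀ x ∈ fs C₂, Complex.I ^ wt x = -1 := by
      intro x hx
      obtain ⟨c, hc, rfl⟩ := hrep₂ x (mem_fs.mp hx)
      rw [I_pow_mod4, wconst v₂ hv₂d c hc, hv₂mod, pow_two, Complex.I_mul_I]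
    rw [Finset.sum_congr rfl hterm, Finset.sum_const, hc2, nsmul_eq_mul, mul_neg_one]
  have S1 : ∑ x ∈ fs C₁, Complex.I ^ wt x
      = ((fs ((C₀ : Set (Fin n → ZMod 2)))).card : ℂ) * Complex.I ^ (wt v₁ % 4) := by
    have hterm : ∀ x ∈ fs C₁, Complex.I ^ wt x = Complex.I ^ (wt v₁ % 4) := by
      intro x hx
      obtain ⟨c, hc, rfl⟩ := hrep₁ x (mem_fs.mp hx)
      rw [I_pow_mod4, wconst v₁ hv₁d c hc]
    rw [Finset.sum_congr rfl hterm, Finset.sum_const, hc1, nsmul_eq_mul]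
  have S3 : ∑ x ∈ fs C₃, Complex.I ^ wt x
      = ((fs ((C₀ : Set (Fin n → ZMod 2)))).card : ℂ) * Complex.I ^ (wt v₃ % 4) := by
    have hterm : ∀ x ∈ fs C₃, Complex.I ^ wt x = Complex.I ^ (wt v₃ % 4) := by
      intro x hx
      obtain ⟨c, hc, rfl⟩ := hrep₃ x (mem_fs.mp hx)
      rw [I_pow_mod4, wconst v₃ hv₃d c hc]
    rw [Finset.sum_congr rfl hterm, Finset.sum_const, hc3, nsmul_eq_mul]
  rw [S0, S1, S2, S3, hcard0'] at hZ
  have hcastpow : (((2:ℕ) ^ (n / 2 - 1) : ℕ) : ℂ) = (2:ℂ) ^ (n / 2 - 1) := by push_cast; ring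
  rw [hcastpow] at hZ
  have h2n : (2:ℂ) ^ (n / 2) = (2:ℂ) ^ (n / 2 - 1) * 2 := by
    rw [← pow_succ]
    congr 1
    omega
  have hsum2 : Complex.I ^ (wt v₁ % 4) + Complex.I ^ (wt v₃ % 4) = 2 := by
    have hcne : ((2:ℂ) ^ (n / 2 - 1)) ≠ 0 := pow_ne_zero _ two_ne_zero
    apply mul_left_cancel₀ hcne
    rw [h2n] at hZ
    linear_combination hZ
  have habs : ∀ k : ℕ, ‖Complex.I ^ k‖ = 1 := by
    intro k
    rw [norm_pow, Complex.norm_I, one_pow]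
  obtain ⟨hA, hB⟩ := unit_sum_two (habs _) (habs _) hsum2
  have h4v₁ : 4 ∣ wt v₁ := by
    apply I_pow_eq_one_iff
    rw [I_pow_mod4]; exact hA
  have h4v₃ : 4 ∣ wt v₃ := by
    apply I_pow_eq_one_iff
    rw [I_pow_mod4]; exact hB
  have h4C₁ : ∀ x ∈ C₁, 4 ∣ wt x := by
    intro x hx
    obtain ⟨c, hc, rfl⟩ := hrep₁ x hx
    have h := wconst v₁ hv₁d c hc
    omega
  have h4C₃ : ∀ x ∈ C₃, 4 ∣ wt x := by
    intro x hx
    obtain ⟨c, hc, rfl⟩ := hrep₃ x hx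
    have h := wconst v₃ hv₃d c hc
    omega
  -- self dot products vanish
  have hdvd2 : ∀ w : ℕ, 4 ∣ w → ((w : ZMod 2) = 0) := by
    intro w hw
    exact (ZMod.natCast_eq_zero_iff _ 2).mpr (dvd_trans (by norm_num) hw)
  have hv₁v₁ : v₁ ⬝ᵥ v₁ = 0 := by rw [dot_self']; exact hdvd2 _ h4v₁
  have hv₃v₃ : v₃ ⬝ᵥ v₃ = 0 := by rw [dot_self']; exact hdvd2 _ h4v₃
  -- v₁ + v₃ lies in C₂
  have cancel : ∀ a b : Fin n → ZMod 2, a + (a + b) = b := by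
    intro a b
    funext i
    simp only [Pi.add_apply]
    rw [← add_assoc, CharTwo.add_self_eq_zero, zero_add]
  have hv13 : v₁ + v₃ ∈ C₂ := by
    have hd : v₁ + v₃ ∈ dualSet ((C₀ : Set (Fin n → ZMod 2))) := by
      intro y hy
      rw [add_dotProduct, hv₁d y hy, hv₃d y hy, add_zero]
    have hcases : v₁ + v₃ ∈ ((C₀ : Set (Fin n → ZMod 2)) ∪ C₁ ∪ C₂ ∪ C₃) := hpart ▸ hd
    rcases hcases with ((h | h) | h) | h
    · exfalso
      have hv₃C₁ : v₃ ∈ C₁ := by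
        rw [hC₁]
        exact ⟨v₁ + v₃, h, cancel v₁ v₃⟩
      exact Set.disjoint_left.mp d13 hv₃C₁ hv₃
    · exfalso
      obtain ⟨c, hc, hcc⟩ := hrep₁ _ h
      have hv₃C₀ : v₃ = c := by
        have h1 := cancel v₁ v₃
        rw [hcc] at h1
        rw [← h1, cancel]
      exact Set.disjoint_left.mp d03 (hv₃C₀ ▸ hc) hv₃
    · exact h
    · exfalso
      obtain ⟨c, hc, hcc⟩ := hrep₃ _ h
      have hv₁C₀ : v₁ = c := by
        have h1 : v₃ + (v₃ + c) = c := cancel v₃ c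
        rw [← hcc] at h1
        have h2 : v₃ + (v₁ + v₃) = v₁ := by
          rw [show v₁ + v₃ = v₃ + v₁ from add_comm _ _, cancel]
        rw [h2] at h1
        exact h1
      exact Set.disjoint_left.mp d01 (hv₁C₀ ▸ hc) hv₁
  have hv₁v₃ : v₁ ⬝ᵥ v₃ = 1 := by
    have h1 := hone₁ _ hv13
    rw [dotProduct_add, hv₁v₁, zero_add] at h1
    exact h1
  -- generic construction
  have main : ∀ (va vb : Fin n → ZMod 2) (Ca Cb : Set (Fin n → ZMod 2)),
      Ca = (va + ·) '' (C₀ : Set (Fin n → ZMod 2)) →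
      Cb = (vb + ·) '' (C₀ : Set (Fin n → ZMod 2)) →
      va ∈ dualSet ((C₀ : Set (Fin n → ZMod 2))) →
      va ⬝ᵥ va = 0 →
      (∀ x ∈ Ca, 4 ∣ wt x) →
      (∀ x ∈ C₂, va ⬝ᵥ x = 1) →
      va ⬝ᵥ vb = 1 →
      (∀ x ∈ dualSet ((C₀ : Set (Fin n → ZMod 2))),
        x ∈ (C₀ : Set (Fin n → ZMod 2)) ∨ x ∈ Ca ∨ x ∈ C₂ ∨ x ∈ Cb) →
      Disjoint ((C₀ : Set (Fin n → ZMod 2))) Ca →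
      Disjoint Ca C₂ →
      ∃ D : Submodule (ZMod 2) (Fin n → ZMod 2),
        (D : Set (Fin n → ZMod 2)) = ↑C₀ ∪ Ca ∧
        (D : Set (Fin n → ZMod 2)) = dualSet (D : Set (Fin n → ZMod 2)) ∧
        (∀ x ∈ D, 4 ∣ wt x) ∧
        (D : Set (Fin n → ZMod 2)) ∩ ↑C = ↑C₀ := by
    intro va vb Ca Cb hCa hCb hvad hvava h4Ca honea hvavb hcover hd0a hdaC2
    have hva : va ∈ Ca := by rw [hCa]; exact ⟨0, C₀.zero_mem, add_zero va⟩
    have hrepa : ∀ x ∈ Ca, ∃ c, c ∈ C₀ ∧ x = va + c := by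
      rw [hCa]; rintro x ⟨c, hc, rfl⟩; exact ⟨c, hc, rfl⟩
    refine ⟨extCode C₀ va, ?_, ?_, ?_, ?_⟩
    · rw [coe_extCode, ← hCa]
    · rw [coe_extCode, ← hCa]
      apply Set.eq_of_subset_of_subset
      · -- self-orthogonality
        intro x hx y hy
        have memdual : ∀ z ∈ (C₀ : Set (Fin n → ZMod 2)) ∪ Ca,
            z ∈ dualSet ((C₀ : Set (Fin n → ZMod 2))) := by
          rintro z (hz | hz)
          · exact hCsubdual (hC₀C z hz)
          · rw [hCa] at hz
            obtain ⟨c, hc, rfl⟩ := hz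
            intro w hw
            rw [add_dotProduct, hvad w hw, hC₀dd c hc w hw, add_zero]
        rcases hy with hy | hy
        · exact memdual x hx y hy
        · rcases hx with hx | hx
          · rw [dotProduct_comm]
            exact memdual y (Or.inr hy) x hx
          · obtain ⟨c, hc, rfl⟩ := hrepa x hx
            obtain ⟨c', hc', rfl⟩ := hrepa y hy
            rw [add_dotProduct, dotProduct_add, dotProduct_add,
              hvava, hvad c' hc', dotProduct_comm c va, hvad c hc,
              hC₀dd c hc c' hc']
            ring
      · -- dual is inside
        intro x hx
        have hxd : x ∈ dualSet ((C₀ : Set (Fin n → ZMod 2))) := by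
          intro y hy
          exact hx y (Or.inl hy)
        have hxva : x ⬝ᵥ va = 0 := hx va (Or.inr hva)
        rcases hcover x hxd with h | h | h | h
        · exact Or.inl h
        · exact Or.inr h
        · exfalso
          have h1 := honea x h
          rw [dotProduct_comm] at h1
          rw [hxva] at h1
          exact one_ne_zero h1.symm
        · exfalso
          rw [hCb] at h
          obtain ⟨c, hc, rfl⟩ := h
          have h1 : va ⬝ᵥ (vb + c) = 1 := by
            rw [dotProduct_add, hvad c hc, add_zero, hvavb]
          rw [dotProduct_comm] at h1
          rw [hxva] at h1
          exact one_ne_zero h1.symm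
    · intro x hx
      rcases (by exact hx : x ∈ (C₀ : Set (Fin n → ZMod 2)) ∪ (va + ·) '' (C₀ : Set _)) with h | h
      · exact hC₀wt x h
      · apply h4Ca
        rw [hCa]
        exact h
    · rw [coe_extCode, ← hCa, hC]
      apply Set.eq_of_subset_of_subset
      · rintro x ⟨hx1 | hx1, hx2 | hx2⟩
        · exact hx1
        · exact hx1
        · exact hx2
        · exact absurd hx2 (Set.disjoint_left.mp hdaC2 hx1).elim
      · intro x hx
        exact ⟨Or.inl hx, Or.inl hx⟩
  have hcover₁ : ∀ x ∈ dualSet ((C₀ : Set (Fin n → ZMod 2))),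
      x ∈ (C₀ : Set (Fin n → ZMod 2)) ∨ x ∈ C₁ ∨ x ∈ C₂ ∨ x ∈ C₃ := by
    intro x hx
    have h : x ∈ ((C₀ : Set (Fin n → ZMod 2)) ∪ C₁ ∪ C₂ ∪ C₃) := hpart ▸ hx
    rcases h with ((h | h) | h) | h <;> tauto
  have hcover₃ : ∀ x ∈ dualSet ((C₀ : Set (Fin n → ZMod 2))),
      x ∈ (C₀ : Set (Fin n → ZMod 2)) ∨ x ∈ C₃ ∨ x ∈ C₂ ∨ x ∈ C₁ := by
    intro x hx
    have h : x ∈ ((C₀ : Set (Fin n → ZMod 2)) ∪ C₁ ∪ C₂ ∪ C₃) := hpart ▸ hx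
    rcases h with ((h | h) | h) | h <;> tauto
  obtain ⟨D₁, hD₁eq, hD₁sd, hD₁we, hD₁int⟩ :=
    main v₁ v₃ C₁ C₃ hC₁ hC₃ hv₁d hv₁v₁ h4C₁ hone₁ hv₁v₃ hcover₁ d01 d12
  obtain ⟨D₃, hD₃eq, hD₃sd, hD₃we, hD₃int⟩ :=
    main v₃ v₁ C₃ C₁ hC₃ hC₁ hv₃d hv₃v₃ h4C₃ hone₃
      (by rw [dotProduct_comm]; exact hv₁v₃) hcover₃ d03 d23.symm
  exact ⟨D₁, D₃, hD₁eq, hD₃eq, hD₁sd, hD₁we, hD₃sd, hD₃we, hD₁int, hD₃int, hfrC₀⟩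
end

section
/- Let C be a linear binary code of length n, and let s be the number of nonzero weights occurring among vectors of the dual code C⊥, i.e., s = |{i : 1 ≤ i ≤ n and some vector of C⊥ has weight i}|. Then the covering radius of C satisfies R(C) ≤ s (the Delsarte bound). -/
open Matrix

open Finset Polynomial

namespace DelsarteAux
variable {n : ℕ}

/-- sign character -/
noncomputable def sgn (a : ZMod 2) : ℝ := if a = 0 then 1 else -1

lemma sgn_zero : sgn (0 : ZMod 2) = 1 := by simp [sgn]

lemma sgn_one : sgn (1 : ZMod 2) = -1 := by norm_num [sgn]

lemma sgn_add (a b : ZMod 2) : sgn (a + b) = sgn a * sgn b := by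
  have h : ∀ a : ZMod 2, a = 0 ∨ a = 1 := by decide
  rcases h a with rfl | rfl <;> rcases h b with rfl | rfl <;>
    simp [sgn_zero, sgn_one, show (1 + 1 : ZMod 2) = 0 from rfl]

lemma sgn_sum {ι : Type*} (s : Finset ι) (f : ι → ZMod 2) :
    sgn (∑ i ∈ s, f i) = ∏ i ∈ s, sgn (f i) := by
  induction s using Finset.cons_induction with
  | empty => simp [sgn_zero]
  | cons i s hi ih => rw [Finset.sum_cons, Finset.prod_cons, sgn_add, ih]

lemma sgn_dot (u y : Fin n → ZMod 2) : sgn (u ⬝ᵥ y) = ∏ i, sgn (u i * y i) := by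
  rw [dotProduct, sgn_sum]

lemma zmod2_sum (f : ZMod 2 → ℝ) : ∑ a : ZMod 2, f a = f 0 + f 1 := by
  have : (Finset.univ : Finset (ZMod 2)) = {0, 1} := by decide
  rw [this, Finset.sum_pair (by decide)]

/-- the dot-product bilinear form -/
noncomputable def dotB (n : ℕ) : LinearMap.BilinForm (ZMod 2) (Fin n → ZMod 2) :=
  LinearMap.mk₂ (ZMod 2) (· ⬝ᵥ ·)
    (fun a b c => add_dotProduct a b c)
    (fun r a b => smul_dotProduct r a b)
    (fun a b c => dotProduct_add a b c)
    (fun r a b => dotProduct_smul r a b)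

lemma dotB_apply (u v : Fin n → ZMod 2) : dotB n u v = u ⬝ᵥ v := rfl

lemma dotB_nondegenerate : (dotB n).Nondegenerate := by
  constructor
  · intro v h
    funext i
    have := h (Pi.single i 1)
    rwa [dotB_apply, dotProduct_single, mul_one] at this
  · intro v h
    funext i
    have := h (Pi.single i 1)
    rwa [dotB_apply, single_dotProduct, one_mul] at this

lemma dotB_refl : (dotB n).IsRefl := by
  intro x y h
  rw [dotB_apply, dotProduct_comm]
  exact h

lemma mem_of_ddual {C : Submodule (ZMod 2) (Fin n → ZMod 2)} {v : Fin n → ZMod 2}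
    (h : ∀ y ∈ dualSet (C : Set (Fin n → ZMod 2)), v ⬝ᵥ y = 0) : v ∈ C := by
  have horth : dualSet (C : Set (Fin n → ZMod 2)) = ((dotB n).orthogonal C : Set _) := by
    ext x
    constructor
    · intro hx y hy
      have := hx y hy
      rwa [dotB_apply, dotProduct_comm]
    · intro hx y hy
      have := hx y hy
      rwa [dotB_apply, dotProduct_comm] at this
  have : v ∈ (dotB n).orthogonal ((dotB n).orthogonal C) := by
    intro y hy
    rw [dotB_apply, dotProduct_comm]
    exact h y (by rw [horth]; exact hy)
  rwa [LinearMap.BilinForm.orthogonal_orthogonal dotB_nondegenerate dotB_refl] at this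

end DelsarteAux

namespace DelsarteAux

lemma mem_span_desc : ∀ (N : ℕ) (q : Polynomial ℝ), q.natDegree ≤ N →
    q ∈ Submodule.span ℝ ((fun k => descPochhammer ℝ k) '' Set.Iic N)
  | 0, q, hq => by
    obtain ⟨a, rfl⟩ := Polynomial.natDegree_eq_zero.mp (Nat.le_zero.mp hq)
    have h1 : descPochhammer ℝ 0 ∈ Submodule.span ℝ
        ((fun k => descPochhammer ℝ k) '' Set.Iic 0) :=
      Submodule.subset_span ⟨0, Set.mem_Iic.mpr le_rfl, rfl⟩
    have : Polynomial.C a = a • descPochhammer ℝ 0 := by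
      simp [descPochhammer_zero, Polynomial.smul_eq_C_mul]
    rw [this]
    exact Submodule.smul_mem _ _ h1
  | (N + 1), q, hq => by
    set c := q.coeff (N + 1) with hc
    have hmonic : (descPochhammer ℝ (N + 1)).Monic := monic_descPochhammer ℝ (N + 1)
    have hdeg : (descPochhammer ℝ (N + 1)).natDegree = N + 1 := descPochhammer_natDegree (R := ℝ) (N + 1)
    have hq' : (q - Polynomial.C c * descPochhammer ℝ (N + 1)).natDegree ≤ N := by
      rw [Polynomial.natDegree_le_iff_coeff_eq_zero]
      intro m hm
      rcases eq_or_lt_of_le (Nat.succ_le_of_lt hm) with h | h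
      · rw [Polynomial.coeff_sub, Polynomial.coeff_C_mul, ← h]
        have : (descPochhammer ℝ (N + 1)).coeff (N + 1) = 1 := by
          have := hmonic.coeff_natDegree
          rwa [hdeg] at this
        rw [this, mul_one, hc, sub_self]
      · rw [Polynomial.coeff_sub, Polynomial.coeff_C_mul,
          Polynomial.coeff_eq_zero_of_natDegree_lt (lt_of_le_of_lt hq h),
          Polynomial.coeff_eq_zero_of_natDegree_lt (by rw [hdeg]; exact h), mul_zero, sub_self]
    have h1 := mem_span_desc N _ hq'
    have h2 : q - Polynomial.C c * descPochhammer ℝ (N + 1) ∈ Submodule.span ℝ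
        ((fun k => descPochhammer ℝ k) '' Set.Iic (N + 1)) := by
      refine Submodule.span_mono (Set.image_mono ?_) h1
      exact Set.Iic_subset_Iic.mpr (Nat.le_succ N)
    have h3 : Polynomial.C c * descPochhammer ℝ (N + 1) ∈ Submodule.span ℝ
        ((fun k => descPochhammer ℝ k) '' Set.Iic (N + 1)) := by
      rw [← Polynomial.smul_eq_C_mul]
      exact Submodule.smul_mem _ _
        (Submodule.subset_span ⟨N + 1, Set.mem_Iic.mpr le_rfl, rfl⟩)
    have := Submodule.add_mem _ h2 h3
    rwa [sub_add_cancel] at this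

end DelsarteAux
theorem stmt7 {n : ℕ} (C : Submodule (ZMod 2) (Fin n → ZMod 2)) :
    coveringRadius C ≤
      ({i | 1 ≤ i ∧ i ≤ n ∧ ∃ x ∈ dualSet (C : Set (Fin n → ZMod 2)), wt x = i}).ncard := by
  classical
  have key : ∀ x : Fin n → ZMod 2, cosetMinWt C x ≤
      ({i | 1 ≤ i ∧ i ≤ n ∧ ∃ x ∈ dualSet (C : Set (Fin n → ZMod 2)), wt x = i}).ncard := by
    intro x
    by_contra hcon
    push_neg at hcon
    -- Finset versions of the dual code and the weight set
    set W : Finset ℕ :=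
      (Finset.Icc 1 n).filter (fun i => ∃ y ∈ dualSet (C : Set (Fin n → ZMod 2)), wt y = i)
      with hWdef
    have hWset : {i | 1 ≤ i ∧ i ≤ n ∧ ∃ x ∈ dualSet (C : Set (Fin n → ZMod 2)), wt x = i}
        = (W : Set ℕ) := by
      ext i
      simp [hWdef, Finset.mem_Icc, and_assoc]
    rw [hWset, Set.ncard_coe_finset] at hcon
    set s := W.card with hs
    have H : ∀ c ∈ C, s < wt (x + c) := by
      intro c hc
      exact lt_of_lt_of_le hcon (Nat.sInf_le ⟨c, hc, rfl⟩)
    set D : Finset (Fin n → ZMod 2) :=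
      Finset.univ.filter (fun y => y ∈ dualSet (C : Set (Fin n → ZMod 2))) with hDdef
    have hmemD : ∀ y : Fin n → ZMod 2, y ∈ D ↔ y ∈ dualSet (C : Set (Fin n → ZMod 2)) := by
      intro y; simp [hDdef]
    have h0D : (0 : Fin n → ZMod 2) ∈ D := by
      rw [hmemD]
      intro y _
      exact zero_dotProduct y
    set z : (Fin n → ZMod 2) → ℕ :=
      fun y => (Finset.univ.filter (fun i => y i = 0)).card with hzdef
    have hadd_self : ∀ v : Fin n → ZMod 2, v + v = 0 := by
      intro v; funext i
      have : ∀ a : ZMod 2, a + a = 0 := by decide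
      exact this (v i)
    -- Step 1: character sums over D vanish for translates near the code
    have hzero_sum : ∀ v : Fin n → ZMod 2, wt v ≤ s →
        ∑ y ∈ D, DelsarteAux.sgn ((x + v) ⬝ᵥ y) = 0 := by
      intro v hv
      have hxv : ¬ (∀ y ∈ dualSet (C : Set (Fin n → ZMod 2)), (x + v) ⬝ᵥ y = 0) := by
        intro hmem
        have hxvC : x + v ∈ C := DelsarteAux.mem_of_ddual hmem
        have h1 := H _ hxvC
        have h2 : x + (x + v) = v := by
          rw [← add_assoc, hadd_self x, zero_add]
        rw [h2] at h1
        omega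
      push_neg at hxv
      obtain ⟨y₀, hy₀mem, hy₀⟩ := hxv
      have hy₀sgn : DelsarteAux.sgn ((x + v) ⬝ᵥ y₀) = -1 := by
        have : ∀ a : ZMod 2, a ≠ 0 → a = 1 := by decide
        rw [this _ hy₀, DelsarteAux.sgn_one]
      have hDadd : ∀ y : Fin n → ZMod 2, y ∈ D ↔ y + y₀ ∈ D := by
        intro y
        rw [hmemD, hmemD]
        constructor
        · intro hy c hc
          rw [add_dotProduct, hy c hc, hy₀mem c hc, add_zero]
        · intro hy c hc
          have := hy c hc
          rw [add_dotProduct, hy₀mem c hc, add_zero] at this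
          exact this
      have hswap : ∑ y ∈ D, DelsarteAux.sgn ((x + v) ⬝ᵥ y)
          = ∑ y ∈ D, DelsarteAux.sgn ((x + v) ⬝ᵥ (y + y₀)) := by
        refine Finset.sum_equiv (Equiv.addRight y₀) (fun y => hDadd y) (fun y _ => ?_)
        show DelsarteAux.sgn ((x + v) ⬝ᵥ y) = DelsarteAux.sgn ((x + v) ⬝ᵥ (y + y₀ + y₀))
        rw [add_assoc, hadd_self y₀, add_zero]
      have hneg : ∑ y ∈ D, DelsarteAux.sgn ((x + v) ⬝ᵥ (y + y₀))
          = - ∑ y ∈ D, DelsarteAux.sgn ((x + v) ⬝ᵥ y) := by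
        rw [← Finset.sum_neg_distrib]
        refine Finset.sum_congr rfl fun y _ => ?_
        rw [dotProduct_add, DelsarteAux.sgn_add, hy₀sgn, mul_neg_one]
      rw [hneg] at hswap
      linarith
    -- Step 2: the binomial moment identities
    have dagger : ∀ k, k ≤ s →
        ∑ y ∈ D, DelsarteAux.sgn (x ⬝ᵥ y) * ((z y).choose k : ℝ) = 0 := by
      intro k hk
      have hM0 : ∑ T ∈ Finset.powersetCard k (Finset.univ : Finset (Fin n)),
          ∑ v ∈ Fintype.piFinset
            (fun i => if i ∈ T then (Finset.univ : Finset (ZMod 2)) else {0}),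
          ∑ y ∈ D, DelsarteAux.sgn ((x + v) ⬝ᵥ y) = 0 := by
        refine Finset.sum_eq_zero fun T hT => Finset.sum_eq_zero fun v hv => ?_
        rw [Finset.mem_powersetCard] at hT
        rw [Fintype.mem_piFinset] at hv
        refine hzero_sum v (le_trans ?_ (le_trans (le_of_eq hT.2) hk))
        refine le_trans (Finset.card_le_card ?_) le_rfl
        intro i hi
        rw [Finset.mem_filter] at hi
        by_contra hiT
        have := hv i
        rw [if_neg hiT, Finset.mem_singleton] at this
        exact hi.2 this
      have hM1 : ∑ T ∈ Finset.powersetCard k (Finset.univ : Finset (Fin n)),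
          ∑ v ∈ Fintype.piFinset
            (fun i => if i ∈ T then (Finset.univ : Finset (ZMod 2)) else {0}),
          ∑ y ∈ D, DelsarteAux.sgn ((x + v) ⬝ᵥ y)
          = (2 : ℝ) ^ k * ∑ y ∈ D, DelsarteAux.sgn (x ⬝ᵥ y) * ((z y).choose k : ℝ) := by
        have e1 : (∑ T ∈ Finset.powersetCard k (Finset.univ : Finset (Fin n)),
            ∑ v ∈ Fintype.piFinset
              (fun i => if i ∈ T then (Finset.univ : Finset (ZMod 2)) else {0}),
            ∑ y ∈ D, DelsarteAux.sgn ((x + v) ⬝ᵥ y))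
            = ∑ y ∈ D, ∑ T ∈ Finset.powersetCard k (Finset.univ : Finset (Fin n)),
              ∑ v ∈ Fintype.piFinset
                (fun i => if i ∈ T then (Finset.univ : Finset (ZMod 2)) else {0}),
              DelsarteAux.sgn ((x + v) ⬝ᵥ y) := by
          rw [show (∑ T ∈ Finset.powersetCard k (Finset.univ : Finset (Fin n)),
            ∑ v ∈ Fintype.piFinset
              (fun i => if i ∈ T then (Finset.univ : Finset (ZMod 2)) else {0}),
            ∑ y ∈ D, DelsarteAux.sgn ((x + v) ⬝ᵥ y))
            = ∑ T ∈ Finset.powersetCard k (Finset.univ : Finset (Fin n)),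
            ∑ y ∈ D, ∑ v ∈ Fintype.piFinset
              (fun i => if i ∈ T then (Finset.univ : Finset (ZMod 2)) else {0}),
            DelsarteAux.sgn ((x + v) ⬝ᵥ y) from
              Finset.sum_congr rfl fun T _ => Finset.sum_comm]
          exact Finset.sum_comm
        rw [e1, Finset.mul_sum]
        · refine Finset.sum_congr rfl fun y hy => ?_
          -- fixed y : compute the double sum over T and v
          have hinner : ∀ T ∈ Finset.powersetCard k (Finset.univ : Finset (Fin n)),
              ∑ v ∈ Fintype.piFinset
                (fun i => if i ∈ T then (Finset.univ : Finset (ZMod 2)) else {0}),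
                DelsarteAux.sgn ((x + v) ⬝ᵥ y)
              = DelsarteAux.sgn (x ⬝ᵥ y) *
                  (if T ⊆ Finset.univ.filter (fun i => y i = 0) then (2 : ℝ) ^ k else 0) := by
            intro T hT
            rw [Finset.mem_powersetCard] at hT
            have step1 : ∑ v ∈ Fintype.piFinset
                (fun i => if i ∈ T then (Finset.univ : Finset (ZMod 2)) else {0}),
                DelsarteAux.sgn ((x + v) ⬝ᵥ y)
                = DelsarteAux.sgn (x ⬝ᵥ y) * ∑ v ∈ Fintype.piFinset
                  (fun i => if i ∈ T then (Finset.univ : Finset (ZMod 2)) else {0}),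
                  DelsarteAux.sgn (v ⬝ᵥ y) := by
              rw [Finset.mul_sum]
              refine Finset.sum_congr rfl fun v _ => ?_
              rw [add_dotProduct, DelsarteAux.sgn_add]
            rw [step1]
            congr 1
            -- now compute ∑_v sgn (v ⬝ᵥ y)
            have step2 : ∑ v ∈ Fintype.piFinset
                (fun i => if i ∈ T then (Finset.univ : Finset (ZMod 2)) else {0}),
                DelsarteAux.sgn (v ⬝ᵥ y)
                = ∏ i, ∑ a ∈ (if i ∈ T then (Finset.univ : Finset (ZMod 2)) else {0}),
                    DelsarteAux.sgn (a * y i) := by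
              rw [Finset.prod_univ_sum]
              refine Finset.sum_congr rfl fun v _ => ?_
              rw [DelsarteAux.sgn_dot]
            rw [step2]
            have step3 : ∀ i : Fin n,
                (∑ a ∈ (if i ∈ T then (Finset.univ : Finset (ZMod 2)) else {0}),
                  DelsarteAux.sgn (a * y i))
                = if i ∈ T then (1 + DelsarteAux.sgn (y i)) else 1 := by
              intro i
              by_cases hi : i ∈ T
              · rw [if_pos hi, if_pos hi, DelsarteAux.zmod2_sum (fun a => DelsarteAux.sgn (a * y i))]
                rw [zero_mul, one_mul, DelsarteAux.sgn_zero]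
              · rw [if_neg hi, if_neg hi, Finset.sum_singleton, zero_mul, DelsarteAux.sgn_zero]
            rw [Finset.prod_congr rfl (fun i _ => step3 i), Finset.prod_ite_mem,
              Finset.univ_inter]
            by_cases hsub : T ⊆ Finset.univ.filter (fun i => y i = 0)
            · rw [if_pos hsub]
              have : ∀ i ∈ T, (1 + DelsarteAux.sgn (y i)) = 2 := by
                intro i hi
                have := hsub hi
                rw [Finset.mem_filter] at this
                rw [this.2, DelsarteAux.sgn_zero]
                norm_num
              rw [Finset.prod_congr rfl this, Finset.prod_const, hT.2]
            · rw [if_neg hsub]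
              obtain ⟨i, hiT, hiy⟩ : ∃ i ∈ T, ¬ (y i = 0) := by
                by_contra hcc
                push_neg at hcc
                exact hsub fun i hi => Finset.mem_filter.mpr ⟨Finset.mem_univ i, hcc i hi⟩
              refine Finset.prod_eq_zero hiT ?_
              rw [DelsarteAux.sgn, if_neg hiy]
              ring
          rw [Finset.sum_congr rfl hinner, ← Finset.mul_sum]
          rw [← Finset.sum_filter]
          have hfilter : (Finset.powersetCard k (Finset.univ : Finset (Fin n))).filter
              (fun T => T ⊆ Finset.univ.filter (fun i => y i = 0))
              = Finset.powersetCard k (Finset.univ.filter (fun i => y i = 0)) := by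
            ext T
            simp only [Finset.mem_filter, Finset.mem_powersetCard]
            constructor
            · rintro ⟨⟨-, hcard⟩, hsub⟩
              exact ⟨hsub, hcard⟩
            · rintro ⟨hsub, hcard⟩
              exact ⟨⟨Finset.subset_univ T, hcard⟩, hsub⟩
          rw [hfilter, Finset.sum_const, Finset.card_powersetCard]
          ring
      rw [hM1] at hM0
      have h2k : (2 : ℝ) ^ k ≠ 0 := by positivity
      exact (mul_eq_zero.mp hM0).resolve_left h2k
    -- Step 3: descending factorial moments vanish
    have daggerDF : ∀ k, k ≤ s →
        ∑ y ∈ D, DelsarteAux.sgn (x ⬝ᵥ y) * ((z y).descFactorial k : ℝ) = 0 := by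
      intro k hk
      have : ∀ y ∈ D, DelsarteAux.sgn (x ⬝ᵥ y) * ((z y).descFactorial k : ℝ)
          = (k.factorial : ℝ) * (DelsarteAux.sgn (x ⬝ᵥ y) * ((z y).choose k : ℝ)) := by
        intro y _
        rw [Nat.descFactorial_eq_factorial_mul_choose]
        push_cast
        ring
      rw [Finset.sum_congr rfl this, ← Finset.mul_sum, dagger k hk, mul_zero]
    -- Step 4: polynomial moments vanish
    have P0 : ∀ q : Polynomial ℝ, q.natDegree ≤ s →
        ∑ y ∈ D, DelsarteAux.sgn (x ⬝ᵥ y) * q.eval ((z y : ℝ)) = 0 := by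
      intro q hq
      have hmem := DelsarteAux.mem_span_desc s q hq
      clear hq
      induction hmem using Submodule.span_induction with
      | mem p hp =>
        obtain ⟨k, hk, rfl⟩ := hp
        have : ∀ y ∈ D, DelsarteAux.sgn (x ⬝ᵥ y) * (descPochhammer ℝ k).eval ((z y : ℝ))
            = DelsarteAux.sgn (x ⬝ᵥ y) * ((z y).descFactorial k : ℝ) := by
          intro y _
          rw [descPochhammer_eval_eq_descFactorial]
        rw [Finset.sum_congr rfl this]
        exact daggerDF k (Set.mem_Iic.mp hk)
      | zero => simp
      | add p r hp hr ihp ihr =>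
        have : ∀ y ∈ D, DelsarteAux.sgn (x ⬝ᵥ y) * (p + r).eval ((z y : ℝ))
            = DelsarteAux.sgn (x ⬝ᵥ y) * p.eval ((z y : ℝ))
              + DelsarteAux.sgn (x ⬝ᵥ y) * r.eval ((z y : ℝ)) := by
          intro y _
          rw [Polynomial.eval_add]
          ring
        rw [Finset.sum_congr rfl this, Finset.sum_add_distrib, ihp, ihr, add_zero]
      | smul a p hp ihp =>
        have : ∀ y ∈ D, DelsarteAux.sgn (x ⬝ᵥ y) * (a • p).eval ((z y : ℝ))
            = a * (DelsarteAux.sgn (x ⬝ᵥ y) * p.eval ((z y : ℝ))) := by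
          intro y _
          rw [Polynomial.eval_smul, smul_eq_mul]
          ring
        rw [Finset.sum_congr rfl this, ← Finset.mul_sum, ihp, mul_zero]
    -- Step 5: the interpolation polynomial
    set q : Polynomial ℝ := ∏ w ∈ W, (Polynomial.C ((w : ℝ))⁻¹ *
      (Polynomial.X - Polynomial.C ((n : ℝ) - (w : ℝ)))) with hqdef
    have hqdeg : q.natDegree ≤ s := by
      refine le_trans (Polynomial.natDegree_prod_le _ _) ?_
      have h1 : ∀ w ∈ W,
          (Polynomial.C ((w : ℝ))⁻¹ * (Polynomial.X - Polynomial.C ((n : ℝ) - (w : ℝ)))).natDegree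
            ≤ 1 := by
        intro w _
        refine le_trans Polynomial.natDegree_mul_le ?_
        rw [Polynomial.natDegree_C, Polynomial.natDegree_X_sub_C]
      refine le_trans (Finset.sum_le_sum h1) ?_
      simp [hs]
    have hWbound : ∀ w ∈ W, 1 ≤ w ∧ w ≤ n := by
      intro w hw
      rw [hWdef, Finset.mem_filter, Finset.mem_Icc] at hw
      exact hw.1
    have hzwt : ∀ y : Fin n → ZMod 2, z y + wt y = n := by
      intro y
      have := Finset.card_filter_add_card_filter_not
        (s := (Finset.univ : Finset (Fin n))) (p := fun i => y i = 0)
      simpa [wt, hzdef] using this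
    have hq0 : q.eval ((z (0 : Fin n → ZMod 2) : ℝ)) = 1 := by
      have hz0 : z (0 : Fin n → ZMod 2) = n := by
        have := hzwt 0
        have hwt0 : wt (0 : Fin n → ZMod 2) = 0 := by
          simp [wt]
        omega
      rw [hz0, hqdef, Polynomial.eval_prod]
      refine Finset.prod_eq_one fun w hw => ?_
      have hwne : ((w : ℝ)) ≠ 0 := by
        have := (hWbound w hw).1
        positivity
      simp only [Polynomial.eval_mul, Polynomial.eval_C, Polynomial.eval_sub, Polynomial.eval_X]
      field_simp
      ring
    have hqz : ∀ y ∈ D, y ≠ 0 → q.eval ((z y : ℝ)) = 0 := by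
      intro y hyD hyne
      have hwtW : wt y ∈ W := by
        rw [hWdef, Finset.mem_filter, Finset.mem_Icc]
        have h1 : 1 ≤ wt y := by
          rcases Function.ne_iff.mp hyne with ⟨i, hi⟩
          have : i ∈ Finset.univ.filter (fun j => y j ≠ 0) := by
            simpa using hi
          have := Finset.card_pos.mpr ⟨i, this⟩
          exact this
        have h2 : wt y ≤ n := by
          have := hzwt y
          omega
        exact ⟨⟨h1, h2⟩, y, (hmemD y).mp hyD, rfl⟩
      rw [hqdef, Polynomial.eval_prod]
      refine Finset.prod_eq_zero hwtW ?_
      simp only [Polynomial.eval_mul, Polynomial.eval_C, Polynomial.eval_sub, Polynomial.eval_X]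
      have : ((z y : ℝ)) - ((n : ℝ) - (wt y : ℝ)) = 0 := by
        have := hzwt y
        have : ((z y : ℝ)) + ((wt y : ℝ)) = (n : ℝ) := by
          exact_mod_cast congrArg (Nat.cast : ℕ → ℝ) this
        linarith
      rw [this, mul_zero]
    -- Step 6: the contradiction
    have hfinal := P0 q hqdeg
    rw [Finset.sum_eq_single_of_mem 0 h0D
      (fun y hy hne => by rw [hqz y hy hne, mul_zero])] at hfinal
    rw [dotProduct_zero, DelsarteAux.sgn_zero, hq0, one_mul] at hfinal
    exact one_ne_zero hfinal
  refine csSup_le ⟨cosetMinWt C 0, 0, rfl⟩ ?_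
  rintro r ⟨x, rfl⟩
  exact key x
end

section
/- Let C be an s-extremal singly even self-dual [24k+8, 12k+4, 4k+2] code, i.e., a singly even self-dual code of length 24k+8 with minimum weight d(C) = 4k+2 whose shadow S has minimum weight d(S) = 4k+4. Then the two doubly even self-dual neighbors C₀ ∪ C₁ and C₀ ∪ C₃ of C have minimum weight exactly 4k+4 (they are extremal), and each has covering radius exactly 4k+2. -/
open Matrix

open Polynomial Finset

namespace SDA

abbrev V (n : ℕ) := Fin n → ZMod 2

def allOne (n : ℕ) : V n := fun _ => 1

lemma zmod2_cases (a : ZMod 2) : a = 0 ∨ a = 1 := by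
  revert a; decide

lemma zmod2_ne_iff {a : ZMod 2} : a ≠ 0 ↔ a = 1 := by revert a; decide

lemma zmod2_add_self (a : ZMod 2) : a + a = 0 := by revert a; decide

lemma vadd_self {n : ℕ} (x : V n) : x + x = 0 := funext fun i => zmod2_add_self (x i)

noncomputable def chi (a : ZMod 2) : ℝ := if a = 0 then 1 else -1

lemma chi_zero : chi 0 = 1 := by simp [chi]

lemma chi_one : chi 1 = -1 := by norm_num [chi]

lemma chi_add (a b : ZMod 2) : chi (a + b) = chi a * chi b := by
  have h11 : (1 + 1 : ZMod 2) = 0 := by decide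
  rcases zmod2_cases a with h | h <;> rcases zmod2_cases b with h' | h' <;>
    subst h <;> subst h' <;> simp [chi_zero, chi_one, h11]

lemma chi_sum {ι : Type*} (s : Finset ι) (f : ι → ZMod 2) :
    chi (∑ i ∈ s, f i) = ∏ i ∈ s, chi (f i) := by
  induction s using Finset.cons_induction with
  | empty => simp [chi_zero]
  | cons a s ha ih => rw [Finset.sum_cons, Finset.prod_cons, chi_add, ih]

lemma chi_ne_zero (a : ZMod 2) : chi a ≠ 0 := by
  rcases zmod2_cases a with h | h <;> subst h <;> norm_num [chi_zero, chi_one]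

lemma wt_le {n : ℕ} (x : V n) : wt x ≤ n := by
  simpa [wt] using Finset.card_filter_le (Finset.univ : Finset (Fin n)) _

lemma wt_zero {n : ℕ} : wt (0 : V n) = 0 := by simp [wt]

lemma wt_eq_zero_iff {n : ℕ} {x : V n} : wt x = 0 ↔ x = 0 := by
  constructor
  · intro h
    rw [wt, Finset.card_eq_zero] at h
    funext i
    by_contra hi
    have hmem : i ∈ Finset.univ.filter (fun j => x j ≠ 0) := by
      simp only [Finset.mem_filter, Finset.mem_univ, true_and]
      simpa using hi
    rw [h] at hmem
    exact absurd hmem (Finset.notMem_empty i)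
  · rintro rfl; exact wt_zero

lemma dot_comm {n : ℕ} (x y : V n) : x ⬝ᵥ y = y ⬝ᵥ x := dotProduct_comm x y

/-- supp of a sum is symmetric difference -/
lemma supp_add {n : ℕ} (x y : V n) :
    Finset.univ.filter (fun i => (x + y) i ≠ 0) =
      ((Finset.univ.filter (fun i => x i ≠ 0)) ∪ (Finset.univ.filter (fun i => y i ≠ 0))) \
        ((Finset.univ.filter (fun i => x i ≠ 0)) ∩ (Finset.univ.filter (fun i => y i ≠ 0))) := by
  ext i
  simp only [Finset.mem_filter, Finset.mem_univ, true_and, Finset.mem_sdiff, Finset.mem_union,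
    Finset.mem_inter, Pi.add_apply]
  have h11 : (1 + 1 : ZMod 2) = 0 := by decide
  rcases zmod2_cases (x i) with h | h <;> rcases zmod2_cases (y i) with h' | h' <;>
    rw [h, h'] <;> simp [h11]

/-- the number of common support coordinates -/
def ov {n : ℕ} (x y : V n) : ℕ :=
  ((Finset.univ.filter (fun i => x i ≠ 0)) ∩ (Finset.univ.filter (fun i => y i ≠ 0))).card

lemma ov_comm {n : ℕ} (x y : V n) : ov x y = ov y x := by
  rw [ov, ov, Finset.inter_comm]

lemma wt_add_eq {n : ℕ} (x y : V n) : wt (x + y) + 2 * ov x y = wt x + wt y := by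
  classical
  set A := Finset.univ.filter (fun i => x i ≠ 0)
  set B := Finset.univ.filter (fun i => y i ≠ 0)
  have h1 : wt (x + y) = ((A ∪ B) \ (A ∩ B)).card := by rw [wt, supp_add]
  have h2 : ((A ∪ B) \ (A ∩ B)).card + (A ∩ B).card = (A ∪ B).card :=
    Finset.card_sdiff_add_card_eq_card (Finset.inter_subset_union)
  have h3 : (A ∩ B).card + (A ∪ B).card = A.card + B.card :=
    Finset.card_inter_add_card_union A B
  have hA : wt x = A.card := rfl
  have hB : wt y = B.card := rfl
  have hov : ov x y = (A ∩ B).card := rfl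
  omega

lemma dot_eq_ov {n : ℕ} (x y : V n) : x ⬝ᵥ y = ((ov x y : ℕ) : ZMod 2) := by
  classical
  have : x ⬝ᵥ y = ∑ i ∈ (Finset.univ.filter (fun i => x i ≠ 0)) ∩
      (Finset.univ.filter (fun i => y i ≠ 0)), (1 : ZMod 2) := by
    rw [dotProduct]
    rw [← Finset.sum_filter_ne_zero]
    refine Finset.sum_congr ?_ ?_
    · ext i
      simp only [Finset.mem_filter, Finset.mem_univ, true_and, Finset.mem_inter]
      constructor
      · intro h
        exact ⟨fun hx => h (by rw [hx, zero_mul]), fun hy => h (by rw [hy, mul_zero])⟩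
      · rintro ⟨hx, hy⟩
        rw [zmod2_ne_iff.mp hx, zmod2_ne_iff.mp hy]
        norm_num
    · intro i hi
      simp only [Finset.mem_inter, Finset.mem_filter, Finset.mem_univ, true_and] at hi
      rw [zmod2_ne_iff.mp hi.1, zmod2_ne_iff.mp hi.2, one_mul]
  rw [this, Finset.sum_const, nsmul_eq_mul, mul_one, ov]

lemma dot_self {n : ℕ} (x : V n) : x ⬝ᵥ x = ((wt x : ℕ) : ZMod 2) := by
  have := dot_eq_ov x x
  rwa [show ov x x = wt x by rw [ov, Finset.inter_self]; rfl] at this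

lemma even_ov_of_dot_zero {n : ℕ} {x y : V n} (h : x ⬝ᵥ y = 0) : 2 ∣ ov x y := by
  rw [dot_eq_ov] at h
  exact (ZMod.natCast_eq_zero_iff _ 2).mp h

lemma odd_ov_of_dot_one {n : ℕ} {x y : V n} (h : x ⬝ᵥ y = 1) : ¬ (2 ∣ ov x y) := by
  intro h2
  have : ((ov x y : ℕ) : ZMod 2) = 0 := (ZMod.natCast_eq_zero_iff _ 2).mpr h2
  rw [dot_eq_ov] at h
  rw [h] at this
  exact one_ne_zero this


section Kraw

variable {n : ℕ}

/-- Krawtchouk value. -/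
noncomputable def Kc (n j i : ℕ) : ℝ :=
  ∑ t ∈ Finset.range (j+1), (-1:ℝ)^t * (i.choose t) * ((n-i).choose (j-t))

lemma coeff_one_add_pow (m t : ℕ) : ((1 + X : ℝ[X])^m).coeff t = m.choose t := by
  rw [add_comm]
  exact_mod_cast Polynomial.coeff_X_add_one_pow ℝ m t

lemma coeff_one_sub_pow (m t : ℕ) : ((1 - X : ℝ[X])^m).coeff t = (-1:ℝ)^t * m.choose t := by
  induction m generalizing t with
  | zero =>
    cases t with
    | zero => simp
    | succ t => simp [Polynomial.coeff_one]
  | succ m ih =>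
    have hmul : ((1 - X : ℝ[X])^(m+1)) = (1-X)^m - (1-X)^m * X := by ring
    cases t with
    | zero =>
      rw [hmul, Polynomial.coeff_sub, Polynomial.coeff_mul_X_zero, sub_zero, ih 0]
      simp
    | succ t =>
      rw [hmul, Polynomial.coeff_sub, Polynomial.coeff_mul_X, ih (t+1), ih t,
        Nat.choose_succ_succ, pow_succ]
      push_cast
      ring

lemma zmod2_univ : (Finset.univ : Finset (ZMod 2)) = {0, 1} := by decide

lemma zmod2_sum {M : Type*} [AddCommMonoid M] (f : ZMod 2 → M) :
    ∑ a : ZMod 2, f a = f 0 + f 1 := by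
  rw [zmod2_univ, Finset.sum_insert (by decide), Finset.sum_singleton]

lemma filter_not_card {α : Type*} [Fintype α] [DecidableEq α] (p : α → Prop) [DecidablePred p] :
    (Finset.univ.filter (fun a => ¬ p a)).card =
      Fintype.card α - (Finset.univ.filter (fun a => p a)).card := by
  rw [Finset.filter_not, Finset.card_sdiff_of_subset (Finset.filter_subset _ _), Finset.card_univ]

lemma gen_id (u : V n) :
    ∑ y : V n, Polynomial.C (chi (u ⬝ᵥ y)) * (X:ℝ[X])^(wt y)
      = (1 - X)^(wt u) * (1 + X)^(n - wt u) := by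
  classical
  have key : ∀ y : V n, Polynomial.C (chi (u ⬝ᵥ y)) * (X:ℝ[X])^(wt y)
      = ∏ i, (Polynomial.C (chi (u i * y i)) * (X:ℝ[X])^(if y i ≠ 0 then 1 else 0)) := by
    intro y
    rw [Finset.prod_mul_distrib, ← map_prod]
    congr 1
    · congr 1
      rw [dotProduct, chi_sum]
    · rw [Finset.prod_pow_eq_pow_sum, wt, Finset.card_filter]
  calc ∑ y : V n, Polynomial.C (chi (u ⬝ᵥ y)) * (X:ℝ[X])^(wt y)
      = ∑ y : V n, ∏ i, (Polynomial.C (chi (u i * y i)) *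
          (X:ℝ[X])^(if y i ≠ 0 then 1 else 0)) := Finset.sum_congr rfl (fun y _ => key y)
    _ = ∏ i, ∑ a : ZMod 2, (Polynomial.C (chi (u i * a)) *
          (X:ℝ[X])^(if a ≠ 0 then 1 else 0)) := by
        rw [Finset.prod_univ_sum]
        rw [Fintype.piFinset_univ]
    _ = ∏ i, (1 + Polynomial.C (chi (u i)) * X) := by
        refine Finset.prod_congr rfl (fun i _ => ?_)
        rw [zmod2_sum]
        norm_num [chi_zero, add_comm]
    _ = (1 - X)^(wt u) * (1 + X)^(n - wt u) := by
        rw [← Finset.prod_filter_mul_prod_filter_not Finset.univ (fun i => u i ≠ 0)]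
        have e1 : ∀ i ∈ Finset.univ.filter (fun i => u i ≠ 0),
            (1 + Polynomial.C (chi (u i)) * X) = (1 - X : ℝ[X]) := by
          intro i hi
          simp only [Finset.mem_filter] at hi
          rw [zmod2_ne_iff.mp hi.2, chi_one]
          simp only [map_neg, Polynomial.C_1]
          ring
        have e2 : ∀ i ∈ Finset.univ.filter (fun i => ¬ u i ≠ 0),
            (1 + Polynomial.C (chi (u i)) * X) = (1 + X : ℝ[X]) := by
          intro i hi
          simp only [Finset.mem_filter, not_not] at hi
          rw [hi.2, chi_zero]
          simp only [Polynomial.C_1]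
          ring
        have hcard2 : (Finset.univ.filter (fun i : Fin n => ¬ u i ≠ 0)).card = n - wt u := by
          rw [filter_not_card]
          simp [wt]
        rw [Finset.prod_congr rfl e1, Finset.prod_congr rfl e2, Finset.prod_const,
          Finset.prod_const, hcard2]
        rfl

lemma sum_chi_wt (u : V n) (j : ℕ) :
    ∑ y ∈ Finset.univ.filter (fun y : V n => wt y = j), chi (u ⬝ᵥ y) = Kc n j (wt u) := by
  classical
  have hL : (∑ y : V n, Polynomial.C (chi (u ⬝ᵥ y)) * (X:ℝ[X])^(wt y)).coeff j
      = ∑ y ∈ Finset.univ.filter (fun y : V n => wt y = j), chi (u ⬝ᵥ y) := by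
    rw [Polynomial.finset_sum_coeff]
    simp only [Polynomial.coeff_C_mul, Polynomial.coeff_X_pow]
    rw [Finset.sum_filter]
    refine Finset.sum_congr rfl (fun y _ => ?_)
    by_cases hy : j = wt y
    · simp [hy]
    · have h2 : ¬ (wt y = j) := fun hc => hy hc.symm
      simp [hy, h2]
      
  have hR : (((1 - X : ℝ[X]))^(wt u) * (1 + X)^(n - wt u)).coeff j = Kc n j (wt u) := by
    rw [Polynomial.coeff_mul, Finset.Nat.sum_antidiagonal_eq_sum_range_succ_mk]
    unfold Kc
    refine Finset.sum_congr rfl (fun t _ => ?_)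
    rw [coeff_one_sub_pow, coeff_one_add_pow]
  rw [← hL, gen_id u]
  exact hR

end Kraw


section KPoly

open Polynomial

/-- Krawtchouk polynomial. -/
noncomputable def KP (n j : ℕ) : ℝ[X] :=
  ∑ t ∈ Finset.range (j+1), Polynomial.C ((-1:ℝ)^t / (t.factorial * (j-t).factorial)) *
    (descPochhammer ℝ t * (descPochhammer ℝ (j-t)).comp (Polynomial.C (n:ℝ) - X))

lemma natDegree_CnX (n : ℕ) : (Polynomial.C (n:ℝ) - X).natDegree = 1 := by
  have : (Polynomial.C (n:ℝ) - X) = -(X - Polynomial.C (n:ℝ)) := by ring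
  rw [this, Polynomial.natDegree_neg, Polynomial.natDegree_X_sub_C]

lemma leadingCoeff_CnX (n : ℕ) : (Polynomial.C (n:ℝ) - X).leadingCoeff = -1 := by
  have : (Polynomial.C (n:ℝ) - X) = -(X - Polynomial.C (n:ℝ)) := by ring
  rw [this, Polynomial.leadingCoeff_neg, (Polynomial.monic_X_sub_C _).leadingCoeff]

lemma dPcomp_leadingCoeff (n m : ℕ) :
    ((descPochhammer ℝ m).comp (Polynomial.C (n:ℝ) - X)).leadingCoeff = (-1:ℝ)^m := by
  rw [Polynomial.leadingCoeff_comp (by rw [natDegree_CnX]; norm_num),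
    (monic_descPochhammer ℝ m).leadingCoeff, one_mul, leadingCoeff_CnX, descPochhammer_natDegree]

lemma dPcomp_ne_zero (n m : ℕ) :
    ((descPochhammer ℝ m).comp (Polynomial.C (n:ℝ) - X)) ≠ 0 := by
  intro h
  have := dPcomp_leadingCoeff n m
  rw [h] at this
  simp only [Polynomial.leadingCoeff_zero] at this
  exact (pow_ne_zero m (by norm_num : (-1:ℝ) ≠ 0)) this.symm

lemma dPcomp_natDegree (n m : ℕ) :
    ((descPochhammer ℝ m).comp (Polynomial.C (n:ℝ) - X)).natDegree = m := by
  rw [Polynomial.natDegree_comp, descPochhammer_natDegree, natDegree_CnX, mul_one]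

lemma KPc_ne (j t : ℕ) : ((-1:ℝ)^t / (t.factorial * (j-t).factorial)) ≠ 0 := by
  apply div_ne_zero
  · exact pow_ne_zero _ (by norm_num)
  · positivity

lemma KPterm_natDegree (n j t : ℕ) (ht : t ≤ j) :
    (Polynomial.C ((-1:ℝ)^t / (t.factorial * (j-t).factorial)) *
      (descPochhammer ℝ t * (descPochhammer ℝ (j-t)).comp (Polynomial.C (n:ℝ) - X))).natDegree
      = j := by
  rw [Polynomial.natDegree_C_mul (KPc_ne j t),
    Polynomial.natDegree_mul (monic_descPochhammer ℝ t).ne_zero (dPcomp_ne_zero n (j-t)),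
    descPochhammer_natDegree, dPcomp_natDegree]
  omega

lemma KPterm_leadingCoeff (n j t : ℕ) (ht : t ≤ j) :
    (Polynomial.C ((-1:ℝ)^t / (t.factorial * (j-t).factorial)) *
      (descPochhammer ℝ t * (descPochhammer ℝ (j-t)).comp (Polynomial.C (n:ℝ) - X))).leadingCoeff
      = (-1:ℝ)^j / (t.factorial * (j-t).factorial) := by
  rw [Polynomial.leadingCoeff_mul, Polynomial.leadingCoeff_mul, Polynomial.leadingCoeff_C,
    (monic_descPochhammer ℝ t).leadingCoeff, dPcomp_leadingCoeff]
  have : (-1:ℝ)^t * (-1:ℝ)^(j-t) = (-1:ℝ)^j := by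
    rw [← pow_add]
    congr 1
    omega
  field_simp
  linear_combination this

lemma KP_coeff_ne (n j : ℕ) : (KP n j).coeff j ≠ 0 := by
  unfold KP
  rw [Polynomial.finset_sum_coeff]
  have hterm : ∀ t ∈ Finset.range (j+1),
      (Polynomial.C ((-1:ℝ)^t / (t.factorial * (j-t).factorial)) *
        (descPochhammer ℝ t * (descPochhammer ℝ (j-t)).comp (Polynomial.C (n:ℝ) - X))).coeff j
      = (-1:ℝ)^j * (1 / (t.factorial * (j-t).factorial)) := by
    intro t ht
    rw [Finset.mem_range] at ht
    set P := Polynomial.C ((-1:ℝ)^t / (t.factorial * (j-t).factorial)) *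
      (descPochhammer ℝ t * (descPochhammer ℝ (j-t)).comp (Polynomial.C (n:ℝ) - X)) with hP
    have h1 : P.natDegree = j := KPterm_natDegree n j t (by omega)
    have h2 : P.leadingCoeff = (-1:ℝ)^j / (t.factorial * (j-t).factorial) :=
      KPterm_leadingCoeff n j t (by omega)
    have h3 : P.coeff j = P.leadingCoeff := by
      conv_lhs => rw [← h1]
      exact Polynomial.coeff_natDegree
    rw [h3, h2]
    ring
  rw [Finset.sum_congr rfl hterm, ← Finset.mul_sum]
  apply mul_ne_zero (pow_ne_zero _ (by norm_num : (-1:ℝ) ≠ 0))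
  have hpos : (0:ℝ) < ∑ t ∈ Finset.range (j+1), (1 / (t.factorial * (j-t).factorial) : ℝ) := by
    apply Finset.sum_pos
    · intro t _
      positivity
    · exact ⟨0, Finset.mem_range.mpr (by omega)⟩
  exact ne_of_gt hpos

lemma KP_natDegree (n j : ℕ) : (KP n j).natDegree = j := by
  apply le_antisymm
  · apply Polynomial.natDegree_sum_le_of_forall_le
    intro t ht
    rw [Finset.mem_range] at ht
    exact le_of_eq (KPterm_natDegree n j t (by omega))
  · exact Polynomial.le_natDegree_of_ne_zero (KP_coeff_ne n j)

lemma KP_eval (n j i : ℕ) (hi : i ≤ n) : (KP n j).eval (i:ℝ) = Kc n j i := by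
  unfold KP Kc
  rw [Polynomial.eval_finset_sum]
  refine Finset.sum_congr rfl (fun t _ => ?_)
  rw [Polynomial.eval_mul, Polynomial.eval_C, Polynomial.eval_mul, Polynomial.eval_comp]
  have h1 : (descPochhammer ℝ t).eval (i:ℝ) = (i.descFactorial t : ℝ) :=
    descPochhammer_eval_eq_descFactorial ℝ i t
  have h2 : (Polynomial.C (n:ℝ) - X).eval (i:ℝ) = ((n - i : ℕ) : ℝ) := by
    rw [Polynomial.eval_sub, Polynomial.eval_C, Polynomial.eval_X, Nat.cast_sub hi]
  rw [h1, h2, descPochhammer_eval_eq_descFactorial]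
  rw [Nat.descFactorial_eq_factorial_mul_choose, Nat.descFactorial_eq_factorial_mul_choose]
  have ht : (t.factorial : ℝ) ≠ 0 := by positivity
  have ht2 : ((j-t).factorial : ℝ) ≠ 0 := by positivity
  push_cast
  field_simp

end KPoly


section Span

open Polynomial

lemma span_poly (P : ℕ → ℝ[X]) (hdeg : ∀ j, (P j).natDegree = j)
    (hne : ∀ j, (P j).coeff j ≠ 0) :
    ∀ (m : ℕ) (q : ℝ[X]), q.natDegree ≤ m →
      ∃ a : ℕ → ℝ, q = ∑ j ∈ Finset.range (m+1), Polynomial.C (a j) * P j := by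
  intro m
  induction m with
  | zero =>
    intro q hq
    refine ⟨fun _ => q.coeff 0 / (P 0).coeff 0, ?_⟩
    rw [Finset.range_one, Finset.sum_singleton]
    have hP0 : P 0 = Polynomial.C ((P 0).coeff 0) := Polynomial.eq_C_of_natDegree_eq_zero (hdeg 0)
    have hq0 : q = Polynomial.C (q.coeff 0) := Polynomial.eq_C_of_natDegree_le_zero hq
    show q = Polynomial.C (q.coeff 0 / (P 0).coeff 0) * P 0
    calc q = Polynomial.C (q.coeff 0) := hq0
      _ = Polynomial.C (q.coeff 0 / (P 0).coeff 0 * (P 0).coeff 0) := by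
          rw [div_mul_cancel₀ _ (hne 0)]
      _ = Polynomial.C (q.coeff 0 / (P 0).coeff 0) * Polynomial.C ((P 0).coeff 0) := by
          rw [Polynomial.C_mul]
      _ = Polynomial.C (q.coeff 0 / (P 0).coeff 0) * P 0 := by rw [← hP0]
  | succ m ih =>
    intro q hq
    set c : ℝ := q.coeff (m+1) / (P (m+1)).coeff (m+1) with hc
    set q' : ℝ[X] := q - Polynomial.C c * P (m+1) with hq'def
    have hcoeffP : (P (m+1)).coeff (m+1) = (P (m+1)).leadingCoeff := by
      rw [Polynomial.leadingCoeff, hdeg]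
    have hq' : q'.natDegree ≤ m := by
      rw [Polynomial.natDegree_le_iff_coeff_eq_zero]
      intro l hl
      rw [hq'def, Polynomial.coeff_sub, Polynomial.coeff_C_mul]
      rcases eq_or_lt_of_le (Nat.succ_le_of_lt hl) with h | h
      · rw [← h, hc, div_mul_cancel₀ _ (hne (m+1)), sub_self]
      · have h1 : q.coeff l = 0 :=
          Polynomial.coeff_eq_zero_of_natDegree_lt (lt_of_le_of_lt hq h)
        have h2 : (P (m+1)).coeff l = 0 :=
          Polynomial.coeff_eq_zero_of_natDegree_lt (by rw [hdeg]; exact h)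
        rw [h1, h2, mul_zero, sub_self]
    obtain ⟨a, ha⟩ := ih q' hq'
    refine ⟨Function.update a (m+1) c, ?_⟩
    rw [Finset.sum_range_succ, Function.update_self]
    have hsum : ∑ j ∈ Finset.range (m+1), Polynomial.C (Function.update a (m+1) c j) * P j
        = ∑ j ∈ Finset.range (m+1), Polynomial.C (a j) * P j := by
      refine Finset.sum_congr rfl (fun j hj => ?_)
      rw [Finset.mem_range] at hj
      rw [Function.update_of_ne (by omega)]
    rw [hsum, ← ha, hq'def]
    ring

end Span

section Delsarte

open Polynomial

theorem delsarte {n : ℕ} (D : Submodule (ZMod 2) (V n))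
    (hsd : (D : Set (V n)) = dualSet (D : Set (V n)))
    (W : Finset ℕ) (hW : ∀ x ∈ D, x ≠ 0 → wt x ∈ W) (h0W : (0:ℕ) ∉ W)
    (x : V n) : ∃ c ∈ D, wt (x + c) ≤ W.card := by
  classical
  rcases le_or_gt n W.card with hn | hn
  · exact ⟨0, D.zero_mem, by simpa using le_trans (wt_le x) hn⟩
  set s := W.card with hs
  set β : ℝ[X] := ∏ w ∈ W, (Polynomial.C (w:ℝ) - X) with hβ
  have hβdeg : β.natDegree ≤ s := by
    refine le_trans (Polynomial.natDegree_prod_le _ _) ?_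
    have he : ∀ w ∈ W, (Polynomial.C (w:ℝ) - X).natDegree = 1 := fun w _ => natDegree_CnX w
    rw [Finset.sum_congr rfl he, Finset.sum_const, smul_eq_mul, mul_one]
  obtain ⟨a, ha⟩ := span_poly (KP n) (KP_natDegree n) (KP_coeff_ne n) s β hβdeg
  set T : Finset (V n) := Set.toFinset (D : Set (V n)) with hT
  have hmemT : ∀ y : V n, y ∈ T ↔ y ∈ D := by
    intro y; rw [hT, Set.mem_toFinset]; rfl
  have h0T : (0 : V n) ∈ T := (hmemT 0).mpr D.zero_mem
  have hTpos : (0:ℝ) < (T.card : ℝ) := by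
    have : 0 < T.card := Finset.card_pos.mpr ⟨0, h0T⟩
    exact_mod_cast this
  set N : ℝ := (T.card : ℝ) with hN
  have claim1 : ∀ y : V n, ∑ u ∈ T, chi (u ⬝ᵥ y) = if y ∈ D then N else 0 := by
    intro y
    by_cases hy : y ∈ D
    · rw [if_pos hy]
      have he : ∀ u ∈ T, chi (u ⬝ᵥ y) = 1 := by
        intro u hu
        have hu' : u ∈ dualSet (D : Set (V n)) := by
          rw [← hsd]; exact (hmemT u).mp hu
        rw [hu' y hy, chi_zero]
      rw [Finset.sum_congr rfl he, Finset.sum_const]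
      simp [hN]
    · rw [if_neg hy]
      have hyd : ∃ u₀ ∈ D, ¬ ((y : V n) ⬝ᵥ u₀ = 0) := by
        by_contra hcon
        push_neg at hcon
        have hyD : y ∈ dualSet (D : Set (V n)) := fun u hu => hcon u hu
        rw [← hsd] at hyD
        exact hy hyD
      obtain ⟨u₀, hu₀D, hu₀⟩ := hyd
      have hchi : chi (u₀ ⬝ᵥ y) = -1 := by
        rw [dot_comm] at hu₀
        rw [zmod2_ne_iff.mp hu₀, chi_one]
      have hbij : ∑ u ∈ T, chi (u ⬝ᵥ y) = ∑ u ∈ T, chi ((u + u₀) ⬝ᵥ y) := by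
        refine Finset.sum_equiv (Equiv.addRight u₀) ?_ ?_
        · intro u
          simp only [Equiv.coe_addRight]
          constructor
          · intro hu
            exact (hmemT _).mpr (D.add_mem ((hmemT u).mp hu) hu₀D)
          · intro hu
            have := D.add_mem ((hmemT _).mp hu) hu₀D
            rw [add_assoc, vadd_self, add_zero] at this
            exact (hmemT u).mpr this
        · intro u _
          simp only [Equiv.coe_addRight]
          rw [add_assoc, vadd_self, add_zero]
      have hneg : ∑ u ∈ T, chi ((u + u₀) ⬝ᵥ y) = - ∑ u ∈ T, chi (u ⬝ᵥ y) := by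
        rw [← Finset.sum_neg_distrib]
        refine Finset.sum_congr rfl (fun u _ => ?_)
        rw [add_dotProduct, chi_add, hchi]
        ring
      rw [hneg] at hbij
      linarith
  set F : V n → ℝ := fun z => ∑ j ∈ Finset.range (s+1), a j * (if wt z = j then 1 else 0)
    with hF
  have hFne : ∀ z : V n, F z ≠ 0 → wt z ≤ s := by
    intro z hz
    by_contra hgt
    apply hz
    rw [hF]
    refine Finset.sum_eq_zero (fun j hj => ?_)
    rw [Finset.mem_range] at hj
    rw [if_neg (by omega), mul_zero]
  have hfhat : ∀ u : V n, (∑ z : V n, F z * chi (u ⬝ᵥ z)) = β.eval ((wt u : ℕ) : ℝ) := by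
    intro u
    have h1 : ∑ z : V n, F z * chi (u ⬝ᵥ z)
        = ∑ j ∈ Finset.range (s+1), a j * ∑ z ∈ Finset.univ.filter (fun z : V n => wt z = j),
            chi (u ⬝ᵥ z) := by
      rw [hF]
      simp only [Finset.sum_mul]
      rw [Finset.sum_comm]
      refine Finset.sum_congr rfl (fun j _ => ?_)
      rw [Finset.mul_sum, Finset.sum_filter]
      refine Finset.sum_congr rfl (fun z _ => ?_)
      by_cases hz : wt z = j <;> simp [hz]
    rw [h1]
    have h2 : ∀ j ∈ Finset.range (s+1), a j * (∑ z ∈ Finset.univ.filter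
        (fun z : V n => wt z = j), chi (u ⬝ᵥ z)) = a j * (KP n j).eval ((wt u : ℕ) : ℝ) := by
      intro j _
      rw [sum_chi_wt, KP_eval n j (wt u) (wt_le u)]
    rw [Finset.sum_congr rfl h2, ha, Polynomial.eval_finset_sum]
    refine Finset.sum_congr rfl (fun j _ => ?_)
    rw [Polynomial.eval_mul, Polynomial.eval_C]
  have main : ∑ c ∈ T, F (x + c) = (1/N) * β.eval 0 := by
    have step1 : ∑ c ∈ T, F (x + c) = ∑ y : V n, (if y ∈ D then F (x + y) else 0) := by
      symm
      rw [← Finset.sum_filter]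
      refine Finset.sum_congr ?_ (fun y _ => rfl)
      ext y
      simp [hmemT y]
    have step2 : ∑ y : V n, (if y ∈ D then F (x + y) else 0)
        = (1/N) * ∑ y : V n, (∑ u ∈ T, chi (u ⬝ᵥ y)) * F (x + y) := by
      rw [Finset.mul_sum]
      refine Finset.sum_congr rfl (fun y _ => ?_)
      rw [claim1 y]
      by_cases hy : y ∈ D
      · rw [if_pos hy, if_pos hy]
        field_simp
      · rw [if_neg hy, if_neg hy]
        ring
    have step3 : ∑ y : V n, (∑ u ∈ T, chi (u ⬝ᵥ y)) * F (x + y)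
        = ∑ u ∈ T, chi (u ⬝ᵥ x) * β.eval ((wt u : ℕ) : ℝ) := by
      simp only [Finset.sum_mul]
      rw [Finset.sum_comm]
      refine Finset.sum_congr rfl (fun u _ => ?_)
      have hre : ∑ y : V n, chi (u ⬝ᵥ y) * F (x + y)
          = ∑ z : V n, chi (u ⬝ᵥ (x + z)) * F (x + (x + z)) :=
        (Fintype.sum_equiv (Equiv.addLeft x)
          (fun z => chi (u ⬝ᵥ (x + z)) * F (x + (x + z)))
          (fun y => chi (u ⬝ᵥ y) * F (x + y)) (fun z => rfl)).symm
      have hsimp : ∀ z : V n, chi (u ⬝ᵥ (x + z)) * F (x + (x + z))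
          = chi (u ⬝ᵥ x) * (F z * chi (u ⬝ᵥ z)) := by
        intro z
        rw [← add_assoc, vadd_self, zero_add, dotProduct_add, chi_add]
        ring
      rw [hre, Finset.sum_congr rfl (fun z _ => hsimp z), ← Finset.mul_sum, hfhat u]
    have step4 : ∑ u ∈ T, chi (u ⬝ᵥ x) * β.eval ((wt u : ℕ) : ℝ) = β.eval 0 := by
      rw [Finset.sum_eq_single_of_mem 0 h0T]
      · rw [zero_dotProduct, chi_zero, one_mul, wt_zero, Nat.cast_zero]
      · intro u hu hne
        have hwu : wt u ∈ W := hW u ((hmemT u).mp hu) hne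
        have hz : β.eval ((wt u : ℕ) : ℝ) = 0 := by
          rw [hβ, Polynomial.eval_prod]
          refine Finset.prod_eq_zero hwu ?_
          rw [Polynomial.eval_sub, Polynomial.eval_C, Polynomial.eval_X, sub_self]
        rw [hz, mul_zero]
    rw [step1, step2, step3, step4]
  have hβ0 : 0 < β.eval 0 := by
    rw [hβ, Polynomial.eval_prod]
    refine Finset.prod_pos (fun w hw => ?_)
    rw [Polynomial.eval_sub, Polynomial.eval_C, Polynomial.eval_X, sub_zero]
    have hw0 : w ≠ 0 := fun h => h0W (h ▸ hw)
    exact_mod_cast Nat.pos_of_ne_zero hw0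
  have hex : ∃ c ∈ T, F (x + c) ≠ 0 := by
    by_contra hcon
    push_neg at hcon
    have hzero : ∑ c ∈ T, F (x + c) = 0 := Finset.sum_eq_zero hcon
    rw [main] at hzero
    have hpos : 0 < (1/N) * β.eval 0 := mul_pos (one_div_pos.mpr hTpos) hβ0
    linarith
  obtain ⟨c, hcT, hcF⟩ := hex
  exact ⟨c, (hmemT c).mp hcT, hFne _ hcF⟩

end Delsarte


section Basic2

lemma sum_eq_wt {n : ℕ} (y : V n) : (∑ i, y i) = ((wt y : ℕ) : ZMod 2) := by
  have hsq : ∀ a : ZMod 2, a * a = a := by decide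
  have h1 : y ⬝ᵥ y = ∑ i, y i := by
    rw [dotProduct]
    exact Finset.sum_congr rfl (fun i _ => hsq (y i))
  rw [← h1, dot_self]

lemma one_dot {n : ℕ} (y : V n) : (allOne n) ⬝ᵥ y = ((wt y : ℕ) : ZMod 2) := by
  rw [dotProduct]
  simp only [allOne, one_mul]
  exact sum_eq_wt y

lemma wt_one {n : ℕ} : wt (allOne n) = n := by
  rw [wt]
  rw [Finset.filter_true_of_mem (fun i _ => (by simp [allOne] : allOne n i ≠ 0))]
  simp

lemma wt_compl {n : ℕ} (x : V n) :
    wt (x + allOne n) = n - wt x := by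
  have hsupp : Finset.univ.filter (fun i => (x + allOne n) i ≠ 0)
      = Finset.univ.filter (fun i => ¬ (x i ≠ 0)) := by
    ext i
    rw [Finset.mem_filter, Finset.mem_filter]
    simp only [Finset.mem_filter, Finset.mem_univ, true_and, Pi.add_apply, not_not, allOne]
    rcases zmod2_cases (x i) with h | h <;> rw [h] <;> decide
  rw [wt, hsupp, filter_not_card]
  simp [wt]

lemma compl_eq_zero {n : ℕ} {x : V n} (h : x + allOne n = 0) : x = allOne n := by
  funext i
  have h2 := congrFun h i
  simp only [Pi.add_apply, Pi.zero_apply, allOne] at h2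
  have : x i = 1 := by
    rcases zmod2_cases (x i) with h' | h'
    · rw [h'] at h2
      exact absurd h2 (by decide)
    · exact h'
  rw [this]
  rfl

lemma dual_add {n : ℕ} {S : Set (V n)} {x y : V n} (hx : x ∈ dualSet S) (hy : y ∈ dualSet S) :
    x + y ∈ dualSet S := by
  intro z hz
  rw [add_dotProduct, hx z hz, hy z hz, add_zero]

end Basic2

section Neighbor

theorem neighbor (k : ℕ) (C C₀ : Submodule (ZMod 2) (V (24*k+8)))
    (hsd : (C : Set (V (24*k+8))) = dualSet (C : Set (V (24*k+8))))
    (hd : minWt C = 4*k+2)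
    (hC₀m : ∀ x, x ∈ C₀ ↔ x ∈ C ∧ 4 ∣ wt x)
    (Ca C₂ Cb : Set (V (24*k+8)))
    (ha : ∃ v, Ca = (v + ·) '' (C₀ : Set (V (24*k+8))))
    (h2 : ∃ v, C₂ = (v + ·) '' (C₀ : Set (V (24*k+8))))
    (hb : ∃ v, Cb = (v + ·) '' (C₀ : Set (V (24*k+8))))
    (d0a : Disjoint (C₀ : Set (V (24*k+8))) Ca)
    (d02 : Disjoint (C₀ : Set (V (24*k+8))) C₂)
    (d0b : Disjoint (C₀ : Set (V (24*k+8))) Cb)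
    (da2 : Disjoint Ca C₂)
    (dab : Disjoint Ca Cb)
    (hpartm : ∀ x, x ∈ dualSet (C₀ : Set (V (24*k+8))) ↔
      x ∈ C₀ ∨ x ∈ Ca ∨ x ∈ C₂ ∨ x ∈ Cb)
    (hCm : ∀ x, x ∈ C ↔ x ∈ C₀ ∨ x ∈ C₂)
    (hSm : ∀ x : V (24*k+8), (x ∈ dualSet (C₀ : Set (V (24*k+8))) ∧ x ∉ C) ↔
      (x ∈ Ca ∨ x ∈ Cb))
    (hS : minWtSet (dualSet (C₀ : Set (V (24*k+8))) \ (C : Set (V (24*k+8)))) = 4*k+4) :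
    ∃ D : Submodule (ZMod 2) (V (24*k+8)),
      (D : Set (V (24*k+8))) = ↑C₀ ∪ Ca ∧
      (D : Set (V (24*k+8))) = dualSet (D : Set (V (24*k+8))) ∧
      (∀ x ∈ D, 4 ∣ wt x) ∧ minWt D = 4*k+4 ∧ coveringRadius D = 4*k+2 := by
  classical
  -- orthogonality of C
  have hCorth : ∀ x ∈ C, ∀ y ∈ C, x ⬝ᵥ y = 0 := by
    intro x hx y hy
    have hx' : x ∈ dualSet (C : Set (V (24*k+8))) := by
      rw [← hsd]; exact hx
    exact hx' y hy
  have hwt_even : ∀ x ∈ C, 2 ∣ wt x := by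
    intro x hx
    have h := hCorth x hx x hx
    rw [dot_self] at h
    exact (ZMod.natCast_eq_zero_iff _ 2).mp h
  -- all-ones vector
  set one : V (24*k+8) := allOne (24*k+8) with hone_def
  have hone_mem : one ∈ C₀ := by
    have h1 : one ∈ C := by
      have : one ∈ dualSet (C : Set (V (24*k+8))) := by
        intro y hy
        rw [hone_def, one_dot]
        obtain ⟨m, hm⟩ := hwt_even y hy
        rw [hm]
        push_cast
        rw [show ((2:ZMod 2)) = 0 by decide]
        ring
      exact (by rw [hsd]; exact this : one ∈ (C : Set (V (24*k+8))))
    refine (hC₀m one).mpr ⟨h1, ?_⟩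
    rw [hone_def, wt_one]
    omega
  -- C ⊆ dualSet C₀
  have hCdual : ∀ x ∈ C, x ∈ dualSet (C₀ : Set (V (24*k+8))) := by
    intro x hx y hy
    have hy' : y ∈ C := ((hC₀m y).mp hy).1
    exact hCorth x hx y hy'
  -- coset structure
  obtain ⟨va, hva⟩ := ha
  obtain ⟨v2, hv2⟩ := h2
  obtain ⟨vb, hvb⟩ := hb
  have coset_mem : ∀ (v : V (24*k+8)) (X : Set (V (24*k+8))),
      X = (v + ·) '' (C₀ : Set (V (24*k+8))) → ∀ x, (x ∈ X ↔ v + x ∈ C₀) := by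
    intro v X hX x
    rw [hX]
    constructor
    · rintro ⟨c, hc, rfl⟩
      have : v + (v + c) = c := by
        rw [← add_assoc, vadd_self, zero_add]
      rw [this]
      exact hc
    · intro h
      exact ⟨v + x, h, by show v + (v + x) = x; rw [← add_assoc, vadd_self, zero_add]⟩
  have coset_add : ∀ (v : V (24*k+8)) (X : Set (V (24*k+8))),
      X = (v + ·) '' (C₀ : Set (V (24*k+8))) →
      (∀ x ∈ X, ∀ y ∈ X, x + y ∈ C₀) ∧ (∀ x ∈ X, ∀ c ∈ C₀, x + c ∈ X) := by
    intro v X hX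
    constructor
    · intro x hx y hy
      have h1 : v + x ∈ C₀ := (coset_mem v X hX x).mp hx
      have h2 : v + y ∈ C₀ := (coset_mem v X hX y).mp hy
      have h3 := C₀.add_mem h1 h2
      have : v + x + (v + y) = x + y := by
        have : v + x + (v + y) = (v + v) + (x + y) := by ring
        rw [this, vadd_self, zero_add]
      rwa [this] at h3
    · intro x hx c hc
      refine (coset_mem v X hX (x + c)).mpr ?_
      have : v + (x + c) = (v + x) + c := by ring
      rw [this]
      exact C₀.add_mem ((coset_mem v X hX x).mp hx) hc
  have hCa_add := (coset_add va Ca hva).1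
  have hCa_coset := (coset_add va Ca hva).2
  have hC2_add := (coset_add v2 C₂ hv2).1
  have hC2_coset := (coset_add v2 C₂ hv2).2
  have hCb_add := (coset_add vb Cb hvb).1
  have hva_mem : va ∈ Ca := by
    rw [hva]
    exact ⟨0, C₀.zero_mem, by show va + 0 = va; rw [add_zero]⟩
  -- subsets of dualSet C₀
  have hCa_dual : ∀ x ∈ Ca, x ∈ dualSet (C₀ : Set (V (24*k+8))) := by
    intro x hx
    exact (hpartm x).mpr (Or.inr (Or.inl hx))
  have hC2_dual : ∀ x ∈ C₂, x ∈ dualSet (C₀ : Set (V (24*k+8))) := by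
    intro x hx
    exact (hpartm x).mpr (Or.inr (Or.inr (Or.inl hx)))
  have hCb_dual : ∀ x ∈ Cb, x ∈ dualSet (C₀ : Set (V (24*k+8))) := by
    intro x hx
    exact (hpartm x).mpr (Or.inr (Or.inr (Or.inr hx)))
  have hC0_dual : ∀ x : V (24*k+8), x ∈ C₀ → x ∈ dualSet (C₀ : Set (V (24*k+8))) := by
    intro x hx
    exact hCdual x ((hC₀m x).mp hx).1
  -- cross lemmas
  have key_add : ∀ x y : V (24*k+8), x + (x + y) = y := by
    intro x y
    rw [← add_assoc, vadd_self, zero_add]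
  have key_add2 : ∀ x y : V (24*k+8), y + (x + y) = x := by
    intro x y
    calc y + (x + y) = x + (y + y) := by ring
    _ = x := by rw [vadd_self, add_zero]
  have cross1 : ∀ x ∈ Ca, ∀ y ∈ Cb, x + y ∈ C₂ := by
    intro x hx y hy
    have hxy : x + y ∈ dualSet (C₀ : Set (V (24*k+8))) :=
      dual_add (hCa_dual x hx) (hCb_dual y hy)
    rcases (hpartm (x+y)).mp hxy with h | h | h | h
    · exfalso
      have hmem : y ∈ Ca := by
        have := hCa_coset x hx (x+y) h
        rwa [key_add] at this
      exact Set.disjoint_left.mp dab hmem hy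
    · exfalso
      have hmem : y ∈ C₀ := by
        have := hCa_add x hx (x+y) h
        rwa [key_add] at this
      exact Set.disjoint_left.mp d0b hmem hy
    · exact h
    · exfalso
      have hmem : x ∈ C₀ := by
        have := hCb_add y hy (x+y) h
        rwa [key_add2] at this
      exact Set.disjoint_left.mp d0a hmem hx
  have cross2 : ∀ x ∈ Ca, ∀ y ∈ C₂, x + y ∈ Cb := by
    intro x hx y hy
    have hxy : x + y ∈ dualSet (C₀ : Set (V (24*k+8))) :=
      dual_add (hCa_dual x hx) (hC2_dual y hy)
    rcases (hpartm (x+y)).mp hxy with h | h | h | h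
    · exfalso
      have hmem : y ∈ Ca := by
        have := hCa_coset x hx (x+y) h
        rwa [key_add] at this
      exact Set.disjoint_left.mp da2 hmem hy
    · exfalso
      have hmem : y ∈ C₀ := by
        have := hCa_add x hx (x+y) h
        rwa [key_add] at this
      exact Set.disjoint_left.mp d02 hmem hy
    · exfalso
      have hmem : x ∈ C₀ := by
        have := hC2_add y hy (x+y) h
        rwa [key_add2] at this
      exact Set.disjoint_left.mp d0a hmem hx
    · exact h
  -- C₂ weights are 2 mod 4
  have hC2wt : ∀ x ∈ C₂, x ∈ C ∧ ¬ (4 ∣ wt x) ∧ 2 ∣ wt x := by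
    intro x hx
    have hxC : x ∈ C := (hCm x).mpr (Or.inr hx)
    refine ⟨hxC, ?_, hwt_even x hxC⟩
    intro h4
    have : x ∈ C₀ := (hC₀m x).mpr ⟨hxC, h4⟩
    exact Set.disjoint_left.mp d02 this hx
  -- shadow
  have hShadow : ∀ x : V (24*k+8), (x ∈ Ca ∨ x ∈ Cb) →
      x ∈ dualSet (C₀ : Set (V (24*k+8))) ∧ x ∉ C := fun x hx => (hSm x).mpr hx
  -- F2 : shadow vectors are non-orthogonal to C₂
  have F2 : ∀ x : V (24*k+8), (x ∈ dualSet (C₀ : Set (V (24*k+8))) ∧ x ∉ C) →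
      ∀ c ∈ C₂, x ⬝ᵥ c = 1 := by
    intro x hx c hc
    rcases zmod2_cases (x ⬝ᵥ c) with h0 | h1
    · exfalso
      apply hx.2
      have : x ∈ dualSet (C : Set (V (24*k+8))) := by
        intro y hy
        rcases (hCm y).mp hy with hy0 | hy2
        · exact hx.1 y hy0
        · have hcy : c + y ∈ C₀ := hC2_add c hc y hy2
          have : x ⬝ᵥ (c + (c + y)) = 0 := by
            rw [dotProduct_add, h0, hx.1 (c+y) hcy, add_zero]
          rwa [key_add] at this
      rw [← hsd] at this
      exact this
    · exact h1
  -- shadow weights are even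
  have hSh_even : ∀ x : V (24*k+8), x ∈ dualSet (C₀ : Set (V (24*k+8))) → 2 ∣ wt x := by
    intro x hx
    have h := hx one hone_mem
    rw [dot_comm, one_dot] at h
    exact (ZMod.natCast_eq_zero_iff _ 2).mp h
  -- shadow weight lower bound
  have hSh_low : ∀ x : V (24*k+8), (x ∈ dualSet (C₀ : Set (V (24*k+8))) ∧ x ∉ C) →
      4*k+4 ≤ wt x := by
    intro x hx
    have hne : x ≠ 0 := by
      intro h
      exact hx.2 (h ▸ C.zero_mem)
    have hmem : wt x ∈ {w | ∃ y ∈ dualSet (C₀ : Set (V (24*k+8))) \ (C : Set (V (24*k+8))),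
        y ≠ 0 ∧ wt y = w} := ⟨x, ⟨hx.1, hx.2⟩, hne, rfl⟩
    have := Nat.sInf_le hmem
    rw [← minWtSet, hS] at this
    exact this
  -- a shadow vector of weight 4k+4
  have hSh_ex : ∃ x : V (24*k+8), (x ∈ dualSet (C₀ : Set (V (24*k+8))) ∧ x ∉ C) ∧
      wt x = 4*k+4 := by
    have hne : {w | ∃ y ∈ dualSet (C₀ : Set (V (24*k+8))) \ (C : Set (V (24*k+8))),
        y ≠ 0 ∧ wt y = w}.Nonempty := by
      by_contra hcon
      rw [Set.not_nonempty_iff_eq_empty] at hcon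
      rw [minWtSet, hcon, Nat.sInf_empty] at hS
      omega
    have hmem := Nat.sInf_mem hne
    rw [← minWtSet, hS] at hmem
    obtain ⟨y, hy, _, hyw⟩ := hmem
    exact ⟨y, ⟨hy.1, hy.2⟩, hyw⟩
  obtain ⟨s₀, hs₀, hs₀w⟩ := hSh_ex
  -- pair-sum congruence for shadow
  have hSh_pair : ∀ x y : V (24*k+8),
      (x ∈ dualSet (C₀ : Set (V (24*k+8))) ∧ x ∉ C) →
      (y ∈ dualSet (C₀ : Set (V (24*k+8))) ∧ y ∉ C) →
      4 ∣ wt x + wt y := by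
    intro x y hx hy
    have hxs := (hSm x).mp hx
    have hys := (hSm y).mp hy
    have hxyC : x + y ∈ C₀ ∨ x + y ∈ C₂ := by
      rcases hxs with hxa | hxb <;> rcases hys with hya | hyb
      · exact Or.inl (hCa_add x hxa y hya)
      · exact Or.inr (cross1 x hxa y hyb)
      · have := cross1 y hya x hxb
        rw [add_comm y x] at this
        exact Or.inr this
      · exact Or.inl (hCb_add x hxb y hyb)
    have hadd := wt_add_eq x y
    have hxx : x ⬝ᵥ x = 0 := by
      rw [dot_self]
      exact (ZMod.natCast_eq_zero_iff _ 2).mpr (hSh_even x hx.1)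
    rcases hxyC with h | h
    · -- x ⬝ᵥ y = 0
      have hdot : x ⬝ᵥ y = 0 := by
        have : x ⬝ᵥ (x + (x + y)) = 0 := by
          rw [dotProduct_add, hxx, hx.1 (x+y) h, add_zero]
        rwa [key_add] at this
      obtain ⟨e, he⟩ := even_ov_of_dot_zero hdot
      have h4 : 4 ∣ wt (x + y) := ((hC₀m _).mp h).2
      omega
    · -- x ⬝ᵥ y = 1
      have hdot : x ⬝ᵥ y = 1 := by
        have : x ⬝ᵥ (x + (x + y)) = 1 := by
          rw [dotProduct_add, hxx, F2 x hx (x+y) h, zero_add]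
        rwa [key_add] at this
      have hodd := odd_ov_of_dot_one hdot
      obtain ⟨hC2a, hC2b, hC2c⟩ := hC2wt (x+y) h
      omega
  have hSh_mod4 : ∀ x : V (24*k+8), (x ∈ dualSet (C₀ : Set (V (24*k+8))) ∧ x ∉ C) →
      4 ∣ wt x := by
    intro x hx
    have := hSh_pair x s₀ hx hs₀
    rw [hs₀w] at this
    omega
  -- construct D
  let D : Submodule (ZMod 2) (V (24*k+8)) :=
    { carrier := ↑C₀ ∪ Ca
      add_mem' := by
        rintro a b (haM | haM) (hbM | hbM)
        · exact Or.inl (C₀.add_mem haM hbM)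
        · refine Or.inr ?_
          have := hCa_coset b hbM a haM
          rwa [add_comm b a] at this
        · exact Or.inr (hCa_coset a haM b hbM)
        · exact Or.inl (hCa_add a haM b hbM)
      zero_mem' := Or.inl C₀.zero_mem
      smul_mem' := by
        intro r x hx
        rcases zmod2_cases r with h | h
        · rw [h, zero_smul]
          exact Or.inl C₀.zero_mem
        · rw [h, one_smul]
          exact hx }
  have hDmem : ∀ x : V (24*k+8), x ∈ D ↔ (x ∈ C₀ ∨ x ∈ Ca) := fun x => Iff.rfl
  have hDcar : (D : Set (V (24*k+8))) = ↑C₀ ∪ Ca := rfl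
  -- doubly even
  have hDde : ∀ x ∈ D, 4 ∣ wt x := by
    intro x hx
    rcases (hDmem x).mp hx with h | h
    · exact ((hC₀m x).mp h).2
    · exact hSh_mod4 x (hShadow x (Or.inl h))
  -- self-dual
  have hDsd : (D : Set (V (24*k+8))) = dualSet (D : Set (V (24*k+8))) := by
    apply Set.eq_of_subset_of_subset
    · intro x hx
      intro y hy
      rw [hDcar] at hx hy
      rcases hx with hx | hx <;> rcases hy with hy | hy
      · exact hCorth x ((hC₀m x).mp hx).1 y ((hC₀m y).mp hy).1
      · rw [dot_comm]
        exact hCa_dual y hy x hx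
      · exact hCa_dual x hx y hy
      · have hxSh := hShadow x (Or.inl hx)
        have hxx : x ⬝ᵥ x = 0 := by
          rw [dot_self]
          exact (ZMod.natCast_eq_zero_iff _ 2).mpr (hSh_even x hxSh.1)
        have hxy0 : x + y ∈ C₀ := hCa_add x hx y hy
        have : x ⬝ᵥ (x + (x + y)) = 0 := by
          rw [dotProduct_add, hxx, hxSh.1 (x+y) hxy0, add_zero]
        rwa [key_add] at this
    · intro z hz
      have hzdual : z ∈ dualSet (C₀ : Set (V (24*k+8))) := by
        intro y hy
        exact hz y (by rw [hDcar]; exact Or.inl hy)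
      have hzva : z ⬝ᵥ va = 0 := hz va (by rw [hDcar]; exact Or.inr hva_mem)
      rw [hDcar]
      rcases (hpartm z).mp hzdual with h | h | h | h
      · exact Or.inl h
      · exact Or.inr h
      · exfalso
        have := F2 va (hShadow va (Or.inl hva_mem)) z h
        rw [dot_comm] at this
        rw [this] at hzva
        exact one_ne_zero hzva
      · exfalso
        have hzSh := hShadow z (Or.inr h)
        have hzz : z ⬝ᵥ z = 0 := by
          rw [dot_self]
          exact (ZMod.natCast_eq_zero_iff _ 2).mpr (hSh_even z hzSh.1)
        have hzva2 : z + va ∈ C₂ := by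
          have := cross1 va hva_mem z h
          rwa [add_comm va z] at this
        have : z ⬝ᵥ (z + (z + va)) = 1 := by
          rw [dotProduct_add, hzz, F2 z hzSh (z+va) hzva2, zero_add]
        rw [key_add] at this
        rw [this] at hzva
        exact one_ne_zero hzva
  -- minimum weight of C elements
  have hCmin : ∀ x ∈ C, x ≠ 0 → 4*k+2 ≤ wt x := by
    intro x hx hne
    have hmem : wt x ∈ {w | ∃ y ∈ (C : Set (V (24*k+8))), y ≠ 0 ∧ wt y = w} :=
      ⟨x, hx, hne, rfl⟩
    have := Nat.sInf_le hmem
    rwa [← minWtSet, ← minWt, hd] at this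
  -- lower bound on D weights
  have hDlow : ∀ x ∈ D, x ≠ 0 → 4*k+4 ≤ wt x := by
    intro x hx hne
    rcases (hDmem x).mp hx with h | h
    · have h1 := hCmin x ((hC₀m x).mp h).1 hne
      have h2 := ((hC₀m x).mp h).2
      omega
    · exact hSh_low x (hShadow x (Or.inl h))
  -- a C₂ vector of weight 4k+2
  have hc2ex : ∃ c ∈ C₂, wt c = 4*k+2 := by
    have hne : {w | ∃ y ∈ (C : Set (V (24*k+8))), y ≠ 0 ∧ wt y = w}.Nonempty := by
      by_contra hcon
      rw [Set.not_nonempty_iff_eq_empty] at hcon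
      rw [minWt, minWtSet, hcon, Nat.sInf_empty] at hd
      omega
    have hmem := Nat.sInf_mem hne
    rw [← minWtSet, ← minWt, hd] at hmem
    obtain ⟨y, hy, hyne, hyw⟩ := hmem
    refine ⟨y, ?_, hyw⟩
    rcases (hCm y).mp hy with h | h
    · exfalso
      have := ((hC₀m y).mp h).2
      omega
    · exact h
  obtain ⟨c₂, hc₂, hc₂w⟩ := hc2ex
  -- coset c₂ + D has min weight ≥ 4k+2
  have hcoset : ∀ c ∈ D, 4*k+2 ≤ wt (c₂ + c) := by
    intro c hc
    rcases (hDmem c).mp hc with h | h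
    · have hmem : c₂ + c ∈ C₂ := hC2_coset c₂ hc₂ c h
      have hC : c₂ + c ∈ C := (hCm _).mpr (Or.inr hmem)
      have hne : c₂ + c ≠ 0 := by
        intro h0
        have : (0 : V (24*k+8)) ∈ C₂ := h0 ▸ hmem
        exact Set.disjoint_left.mp d02 (C₀.zero_mem) this
      exact hCmin _ hC hne
    · have hmem : c₂ + c ∈ Cb := by
        have := cross2 c h c₂ hc₂
        rwa [add_comm c c₂] at this
      have := hSh_low _ (hShadow _ (Or.inr hmem))
      omega
  -- complement trick
  have hone_D : one ∈ D := (hDmem one).mpr (Or.inl hone_mem)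
  have hcompl : ∀ x ∈ D, x ≠ 0 → wt x ≤ 20*k+4 ∨ wt x = 24*k+8 := by
    intro x hx hne
    by_cases hx1 : wt x = 24*k+8
    · exact Or.inr hx1
    refine Or.inl ?_
    have hxone : x + one ∈ D := D.add_mem hx hone_D
    have hxone_ne : x + one ≠ 0 := by
      intro h0
      have := compl_eq_zero (hone_def ▸ h0)
      rw [this] at hx1
      rw [wt_one] at hx1
      omega
    have h1 := hDlow (x + one) hxone hxone_ne
    rw [hone_def] at h1
    rw [wt_compl] at h1
    have h2 := wt_le x
    omega
  -- Delsarte application (a) : some element of weight 4k+4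
  have hex4 : ∃ x ∈ D, x ≠ 0 ∧ wt x = 4*k+4 := by
    by_contra hcon
    push_neg at hcon
    set W₁ : Finset ℕ :=
      ((Finset.range (4*k)).image (fun i => 4*k+8+4*i)) ∪ {24*k+8} with hW₁def
    have hW₁ : ∀ x ∈ D, x ≠ 0 → wt x ∈ W₁ := by
      intro x hx hne
      have h4 := hDde x hx
      have hlow := hDlow x hx hne
      have hno := hcon x hx hne
      rcases hcompl x hx hne with h | h
      · obtain ⟨m, hm⟩ := h4
        refine Finset.mem_union_left _ ?_
        refine Finset.mem_image.mpr ⟨m - (k+2), Finset.mem_range.mpr (by omega), by omega⟩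
      · exact Finset.mem_union_right _ (by simp [h])
    have h0W₁ : (0:ℕ) ∉ W₁ := by
      rw [hW₁def]
      simp only [Finset.mem_union, Finset.mem_image, Finset.mem_range, Finset.mem_singleton]
      push_neg
      constructor
      · intro i _
        omega
      · omega
    have hcard : W₁.card ≤ 4*k+1 := by
      refine le_trans (Finset.card_union_le _ _) ?_
      have h1 := Finset.card_image_le (s := Finset.range (4*k)) (f := fun i => 4*k+8+4*i)
      rw [Finset.card_range] at h1
      simp only [Finset.card_singleton]
      omega
    obtain ⟨c, hcD, hcw⟩ := delsarte D hDsd W₁ hW₁ h0W₁ c₂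
    have := hcoset c hcD
    omega
  -- minWt D = 4k+4
  obtain ⟨x₄, hx₄D, hx₄ne, hx₄w⟩ := hex4
  have hminD : minWt D = 4*k+4 := by
    rw [minWt, minWtSet]
    apply le_antisymm
    · exact Nat.sInf_le (by exact ⟨x₄, hx₄D, hx₄ne, hx₄w⟩)
    · apply le_csInf (by exact ⟨4*k+4, x₄, hx₄D, hx₄ne, hx₄w⟩)
      rintro w ⟨y, hyD, hyne, rfl⟩
      exact hDlow y hyD hyne
  -- Delsarte application (b) : covering radius
  set W₂ : Finset ℕ :=
    ((Finset.range (4*k+1)).image (fun i => 4*k+4+4*i)) ∪ {24*k+8} with hW₂def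
  have hW₂ : ∀ x ∈ D, x ≠ 0 → wt x ∈ W₂ := by
    intro x hx hne
    have h4 := hDde x hx
    have hlow := hDlow x hx hne
    rcases hcompl x hx hne with h | h
    · obtain ⟨m, hm⟩ := h4
      refine Finset.mem_union_left _ ?_
      refine Finset.mem_image.mpr ⟨m - (k+1), Finset.mem_range.mpr (by omega), by omega⟩
    · exact Finset.mem_union_right _ (by simp [h])
  have h0W₂ : (0:ℕ) ∉ W₂ := by
    rw [hW₂def]
    simp only [Finset.mem_union, Finset.mem_image, Finset.mem_range, Finset.mem_singleton]
    push_neg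
    constructor
    · intro i _
      omega
    · omega
  have hcard₂ : W₂.card ≤ 4*k+2 := by
    refine le_trans (Finset.card_union_le _ _) ?_
    have h1 := Finset.card_image_le (s := Finset.range (4*k+1)) (f := fun i => 4*k+4+4*i)
    rw [Finset.card_range] at h1
    simp only [Finset.card_singleton]
    omega
  have hcov_le : ∀ x : V (24*k+8), cosetMinWt D x ≤ 4*k+2 := by
    intro x
    obtain ⟨c, hcD, hcw⟩ := delsarte D hDsd W₂ hW₂ h0W₂ x
    rw [cosetMinWt]
    exact le_trans (Nat.sInf_le (by exact ⟨c, hcD, rfl⟩)) (by omega)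
  have hcov_c₂ : cosetMinWt D c₂ = 4*k+2 := by
    rw [cosetMinWt]
    apply le_antisymm
    · refine le_trans (Nat.sInf_le (by exact ⟨0, D.zero_mem, by rw [add_zero]⟩)) ?_
      rw [hc₂w]
    · apply le_csInf (by exact ⟨wt c₂, 0, D.zero_mem, by rw [add_zero]⟩)
      rintro w ⟨c, hcD, rfl⟩
      exact hcoset c hcD
  have hcovD : coveringRadius D = 4*k+2 := by
    rw [coveringRadius]
    apply le_antisymm
    · apply csSup_le (by exact ⟨4*k+2, c₂, hcov_c₂⟩)
      rintro r ⟨x, rfl⟩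
      exact hcov_le x
    · apply le_csSup
      · refine ⟨4*k+2, ?_⟩
        rintro r ⟨x, rfl⟩
        exact hcov_le x
      · exact ⟨c₂, hcov_c₂⟩
  exact ⟨D, hDcar, hDsd, hDde, hminD, hcovD⟩

end Neighbor

end SDA

theorem stmt8 (k : ℕ) (C C₀ : Submodule (ZMod 2) (Fin (24*k+8) → ZMod 2))
    (hsd : (C : Set (Fin (24*k+8) → ZMod 2)) = dualSet (C : Set (Fin (24*k+8) → ZMod 2)))
    (hse : ∃ x ∈ C, wt x % 4 = 2)
    (hd : minWt C = 4*k+2)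
    (hC₀ : (C₀ : Set (Fin (24*k+8) → ZMod 2)) = {x | x ∈ C ∧ 4 ∣ wt x})
    (C₁ C₂ C₃ : Set (Fin (24*k+8) → ZMod 2))
    (h₁ : ∃ v, C₁ = (v + ·) '' (C₀ : Set (Fin (24*k+8) → ZMod 2)))
    (h₂ : ∃ v, C₂ = (v + ·) '' (C₀ : Set (Fin (24*k+8) → ZMod 2)))
    (h₃ : ∃ v, C₃ = (v + ·) '' (C₀ : Set (Fin (24*k+8) → ZMod 2)))
    (hdisj : List.Pairwise Disjoint [(C₀ : Set (Fin (24*k+8) → ZMod 2)), C₁, C₂, C₃])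
    (hpart : dualSet (C₀ : Set (Fin (24*k+8) → ZMod 2)) = ↑C₀ ∪ C₁ ∪ C₂ ∪ C₃)
    (hC : (C : Set (Fin (24*k+8) → ZMod 2)) = ↑C₀ ∪ C₂)
    (hS13 : dualSet (C₀ : Set (Fin (24*k+8) → ZMod 2)) \ ↑C = C₁ ∪ C₃)
    (hS : minWtSet (dualSet (C₀ : Set (Fin (24*k+8) → ZMod 2)) \ ↑C) = 4*k+4) :
    ∃ D₁ D₃ : Submodule (ZMod 2) (Fin (24*k+8) → ZMod 2),
      (D₁ : Set (Fin (24*k+8) → ZMod 2)) = ↑C₀ ∪ C₁ ∧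
      (D₃ : Set (Fin (24*k+8) → ZMod 2)) = ↑C₀ ∪ C₃ ∧
      (D₁ : Set (Fin (24*k+8) → ZMod 2)) = dualSet (D₁ : Set (Fin (24*k+8) → ZMod 2)) ∧
      (∀ x ∈ D₁, 4 ∣ wt x) ∧ minWt D₁ = 4*k+4 ∧ coveringRadius D₁ = 4*k+2 ∧
      (D₃ : Set (Fin (24*k+8) → ZMod 2)) = dualSet (D₃ : Set (Fin (24*k+8) → ZMod 2)) ∧
      (∀ x ∈ D₃, 4 ∣ wt x) ∧ minWt D₃ = 4*k+4 ∧ coveringRadius D₃ = 4*k+2 := by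
  have hC₀m : ∀ x, x ∈ C₀ ↔ (x ∈ C ∧ 4 ∣ wt x) := by
    intro x
    have h := Set.ext_iff.mp hC₀ x
    simpa using h
  have hpartm : ∀ x, x ∈ dualSet (C₀ : Set (Fin (24*k+8) → ZMod 2)) ↔
      (x ∈ C₀ ∨ x ∈ C₁ ∨ x ∈ C₂ ∨ x ∈ C₃) := by
    intro x
    have h := Set.ext_iff.mp hpart x
    simpa [Set.mem_union, SetLike.mem_coe, or_assoc] using h
  have hCm : ∀ x, x ∈ C ↔ (x ∈ C₀ ∨ x ∈ C₂) := by
    intro x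
    have h := Set.ext_iff.mp hC x
    simpa [Set.mem_union, SetLike.mem_coe, or_assoc] using h
  have hSm1 : ∀ x : Fin (24*k+8) → ZMod 2,
      (x ∈ dualSet (C₀ : Set (Fin (24*k+8) → ZMod 2)) ∧ x ∉ C) ↔ (x ∈ C₁ ∨ x ∈ C₃) := by
    intro x
    have h := Set.ext_iff.mp hS13 x
    simpa [Set.mem_diff, Set.mem_union, SetLike.mem_coe, or_assoc] using h
  rw [List.pairwise_cons, List.pairwise_cons, List.pairwise_cons] at hdisj
  obtain ⟨h0all, h1all, h2all, -⟩ := hdisj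
  have d01 : Disjoint (C₀ : Set (Fin (24*k+8) → ZMod 2)) C₁ := h0all C₁ (by simp)
  have d02 : Disjoint (C₀ : Set (Fin (24*k+8) → ZMod 2)) C₂ := h0all C₂ (by simp)
  have d03 : Disjoint (C₀ : Set (Fin (24*k+8) → ZMod 2)) C₃ := h0all C₃ (by simp)
  have d12 : Disjoint C₁ C₂ := h1all C₂ (by simp)
  have d13 : Disjoint C₁ C₃ := h1all C₃ (by simp)
  have d23 : Disjoint C₂ C₃ := h2all C₃ (by simp)
  obtain ⟨D₁, hcar1, hsd1, hde1, hmin1, hcov1⟩ :=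
    SDA.neighbor k C C₀ hsd hd hC₀m C₁ C₂ C₃ h₁ h₂ h₃ d01 d02 d03 d12 d13 hpartm hCm hSm1 hS
  obtain ⟨D₃, hcar3, hsd3, hde3, hmin3, hcov3⟩ :=
    SDA.neighbor k C C₀ hsd hd hC₀m C₃ C₂ C₁ h₃ h₂ h₁ d03 d02 d01 d23.symm d13.symm
      (fun x => by rw [hpartm x]; tauto) hCm (fun x => by rw [hSm1 x]; tauto) hS
  exact ⟨D₁, D₃, hcar1, hcar3, hsd1, hde1, hmin1, hcov1, hsd3, hde3, hmin3, hcov3⟩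
end

section
/- Let D be a doubly even self-dual code of length n ≡ 0 (mod 8) and let v + D be a coset of D with v ∉ D and wt(x) ≡ 2 (mod 4) for some x ∈ v + D. With D₀ = {y ∈ D : v·y = 0} and cosets D₀, D₁, D₂, D₃ of D₀ in D₀⊥ such that D = D₀ ∪ D₂ and v + D = D₁ ∪ D₃, the coset D₁ consists precisely of the vectors of v + D of weight ≡ 2 (mod 4) and D₃ consists precisely of those of weight ≡ 0 (mod 4). -/
open Matrix

lemma keyAdd {n} (x y : Fin n → ZMod 2) :
    ∃ s : ℕ, wt (x+y) + 2*s = wt x + wt y ∧ ((s : ZMod 2) = x ⬝ᵥ y) := by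
  refine ⟨(Finset.univ.filter (fun i => x i ≠ 0 ∧ y i ≠ 0)).card, ?_, ?_⟩
  · unfold wt
    simp only [Finset.card_filter, Pi.add_apply, Finset.mul_sum, ← Finset.sum_add_distrib]
    refine Finset.sum_congr rfl fun i _ => ?_
    have h : ∀ a b : ZMod 2, ((if a + b ≠ 0 then 1 else 0) + 2 * (if a ≠ 0 ∧ b ≠ 0 then 1 else 0) : ℕ)
        = (if a ≠ 0 then 1 else 0) + (if b ≠ 0 then 1 else 0) := by decide
    exact h (x i) (y i)
  · rw [Finset.card_filter, Nat.cast_sum, dotProduct]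
    refine Finset.sum_congr rfl fun i _ => ?_
    rw [Nat.cast_ite]
    have h : ∀ a b : ZMod 2, (if a ≠ 0 ∧ b ≠ 0 then ((1:ℕ):ZMod 2) else ((0:ℕ):ZMod 2)) = a * b := by decide
    exact h (x i) (y i)

lemma wt_add_zero {n} (x y : Fin n → ZMod 2) (h : x ⬝ᵥ y = 0) :
    wt (x+y) % 4 = (wt x + wt y) % 4 := by
  obtain ⟨s, hs, hc⟩ := keyAdd x y
  rw [h] at hc
  have : (2:ℕ) ∣ s := (ZMod.natCast_eq_zero_iff s 2).mp hc
  omega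

lemma wt_add_one {n} (x y : Fin n → ZMod 2) (h : x ⬝ᵥ y ≠ 0) :
    wt (x+y) % 4 = (wt x + wt y + 2) % 4 := by
  obtain ⟨s, hs, hc⟩ := keyAdd x y
  have : ¬ (2:ℕ) ∣ s := fun hd => h (hc ▸ (ZMod.natCast_eq_zero_iff s 2).mpr hd)
  omega

lemma addSelf {n} (u : Fin n → ZMod 2) : u + u = 0 := by
  funext i
  have : ∀ a : ZMod 2, a + a = 0 := by decide
  exact this (u i)

lemma main_aux {n : ℕ} (D : Submodule (ZMod 2) (Fin n → ZMod 2))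
    (hsd : (D : Set (Fin n → ZMod 2)) = dualSet (D : Set (Fin n → ZMod 2)))
    (hde : ∀ x ∈ D, 4 ∣ wt x)
    (v : Fin n → ZMod 2)
    (D₀ A B : Set (Fin n → ZMod 2))
    (hD₀ : D₀ = {x | x ∈ D ∧ v ⬝ᵥ x = 0})
    (hA : ∃ w, A = (w + ·) '' D₀) (hB : ∃ w, B = (w + ·) '' D₀)
    (hdisj : Disjoint A B)
    (hvD : (v + ·) '' (D : Set (Fin n → ZMod 2)) = A ∪ B)
    (x₀ : Fin n → ZMod 2) (hx₀A : x₀ ∈ A) (hx₀2 : wt x₀ % 4 = 2) :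
    (A = {x | x ∈ (v + ·) '' (D : Set (Fin n → ZMod 2)) ∧ wt x % 4 = 2} ∧
     B = {x | x ∈ (v + ·) '' (D : Set (Fin n → ZMod 2)) ∧ wt x % 4 = 0}) := by
  obtain ⟨wA, rfl⟩ := hA
  obtain ⟨wB, rfl⟩ := hB
  -- all code vectors are orthogonal
  have hdual : ∀ c ∈ D, ∀ d ∈ D, c ⬝ᵥ d = 0 := by
    intro c hc d hd
    have : c ∈ dualSet (D : Set (Fin n → ZMod 2)) := hsd ▸ hc
    exact this d hd
  -- D₀ is closed under addition and contains 0
  have hD₀mem : ∀ d ∈ D₀, d ∈ D ∧ v ⬝ᵥ d = 0 := by intro d hd; rw [hD₀] at hd; exact hd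
  have hzero : (0 : Fin n → ZMod 2) ∈ D₀ := by
    rw [hD₀]; exact ⟨D.zero_mem, dotProduct_zero v⟩
  have hadd : ∀ d ∈ D₀, ∀ d' ∈ D₀, d + d' ∈ D₀ := by
    intro d hd d' hd'
    obtain ⟨hd1, hd2⟩ := hD₀mem d hd
    obtain ⟨hd1', hd2'⟩ := hD₀mem d' hd'
    rw [hD₀]
    exact ⟨D.add_mem hd1 hd1', by rw [dotProduct_add, hd2, hd2', add_zero]⟩
  -- weight mod 4 is constant on x + D₀ for x in v + D
  have const : ∀ x ∈ (v + ·) '' (D : Set (Fin n → ZMod 2)), ∀ d ∈ D₀,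
      wt (x + d) % 4 = wt x % 4 := by
    rintro x ⟨c, hc, rfl⟩ d hd
    show wt ((v + c) + d) % 4 = wt (v + c) % 4
    obtain ⟨hd1, hd2⟩ := hD₀mem d hd
    have horth : (v + c) ⬝ᵥ d = 0 := by
      rw [add_dotProduct, hd2, hdual c hc d hd1, add_zero]
    have h4 : 4 ∣ wt d := hde d hd1
    have := wt_add_zero (v + c) d horth
    omega
  -- any two elements of the same coset differ by an element of D₀
  have cosetRel : ∀ w : Fin n → ZMod 2, ∀ x ∈ (w + ·) '' D₀, ∀ z ∈ (w + ·) '' D₀,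
      ∃ d ∈ D₀, x = z + d := by
    rintro w x ⟨d₁, hd₁, rfl⟩ z ⟨d₂, hd₂, rfl⟩
    refine ⟨d₂ + d₁, hadd d₂ hd₂ d₁ hd₁, ?_⟩
    rw [add_assoc, ← add_assoc d₂ d₂ d₁, addSelf, zero_add]
  have hx₀mem : x₀ ∈ (v + ·) '' (D : Set (Fin n → ZMod 2)) := hvD ▸ Set.mem_union_left _ hx₀A
  -- every element of A has weight ≡ 2 mod 4
  have wtA : ∀ x ∈ (wA + ·) '' D₀, wt x % 4 = 2 := by
    intro x hxA
    obtain ⟨d, hd, rfl⟩ := cosetRel wA x hxA x₀ hx₀A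
    rw [const x₀ hx₀mem d hd]; exact hx₀2
  -- wB is in B hence in v + D, and its weight is ≡ 0 mod 4
  have hwBB : wB ∈ (wB + ·) '' D₀ := ⟨0, hzero, by simp⟩
  have hwBmem : wB ∈ (v + ·) '' (D : Set (Fin n → ZMod 2)) := hvD ▸ Set.mem_union_right _ hwBB
  have wtwB : wt wB % 4 = 0 := by
    obtain ⟨c₀, hc₀, hx₀eq⟩ := hx₀mem
    obtain ⟨c₃, hc₃, hwBeq⟩ := hwBmem
    set e := c₀ + c₃ with he
    have heD : e ∈ D := D.add_mem hc₀ hc₃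
    have hwB : wB = x₀ + e := by
      rw [← hx₀eq, ← hwBeq, he, ← add_assoc, add_assoc v c₀ c₀, addSelf, add_zero]
    have hve : v ⬝ᵥ e ≠ 0 := by
      intro hve0
      have heD₀ : e ∈ D₀ := by rw [hD₀]; exact ⟨heD, hve0⟩
      have : wB ∈ (wA + ·) '' D₀ := by
        obtain ⟨d₀, hd₀, hx₀A'⟩ := hx₀A
        replace hx₀A' : wA + d₀ = x₀ := hx₀A'
        refine ⟨d₀ + e, hadd d₀ hd₀ e heD₀, ?_⟩
        show wA + (d₀ + e) = wB
        rw [← add_assoc, hx₀A', hwB]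
      exact Set.disjoint_left.mp hdisj this hwBB
    have horth : x₀ ⬝ᵥ e ≠ 0 := by
      rw [← hx₀eq, add_dotProduct, hdual c₀ hc₀ e heD, add_zero]
      exact hve
    have h4 : 4 ∣ wt e := hde e heD
    have := wt_add_one x₀ e horth
    rw [hwB]
    omega
  have wtB : ∀ x ∈ (wB + ·) '' D₀, wt x % 4 = 0 := by
    intro x hxB
    obtain ⟨d, hd, rfl⟩ := cosetRel wB x hxB wB hwBB
    rw [const wB hwBmem d hd]; exact wtwB
  constructor
  · ext x
    constructor
    · intro hxA
      exact ⟨hvD ▸ Set.mem_union_left _ hxA, wtA x hxA⟩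
    · rintro ⟨hxm, hx2⟩
      rcases (hvD ▸ hxm : x ∈ _ ∪ _) with h | h
      · exact h
      · have := wtB x h; omega
  · ext x
    constructor
    · intro hxB
      exact ⟨hvD ▸ Set.mem_union_right _ hxB, wtB x hxB⟩
    · rintro ⟨hxm, hx0⟩
      rcases (hvD ▸ hxm : x ∈ _ ∪ _) with h | h
      · have := wtA x h; omega
      · exact h

theorem stmt13 {n : ℕ} (h8 : 8 ∣ n) (D : Submodule (ZMod 2) (Fin n → ZMod 2))
    (hsd : (D : Set (Fin n → ZMod 2)) = dualSet (D : Set (Fin n → ZMod 2)))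
    (hde : ∀ x ∈ D, 4 ∣ wt x)
    (v : Fin n → ZMod 2) (hv : v ∉ D)
    (hx : ∃ x ∈ (v + ·) '' (D : Set (Fin n → ZMod 2)), wt x % 4 = 2)
    (D₀ D₁ D₃ : Set (Fin n → ZMod 2))
    (hD₀ : D₀ = {x | x ∈ D ∧ v ⬝ᵥ x = 0})
    (h₁ : ∃ w, D₁ = (w + ·) '' D₀) (h₃ : ∃ w, D₃ = (w + ·) '' D₀)
    (hdisj : Disjoint D₁ D₃)
    (hvD : (v + ·) '' (D : Set (Fin n → ZMod 2)) = D₁ ∪ D₃) :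
    (D₁ = {x | x ∈ (v + ·) '' (D : Set (Fin n → ZMod 2)) ∧ wt x % 4 = 2} ∧
     D₃ = {x | x ∈ (v + ·) '' (D : Set (Fin n → ZMod 2)) ∧ wt x % 4 = 0}) ∨
    (D₃ = {x | x ∈ (v + ·) '' (D : Set (Fin n → ZMod 2)) ∧ wt x % 4 = 2} ∧
     D₁ = {x | x ∈ (v + ·) '' (D : Set (Fin n → ZMod 2)) ∧ wt x % 4 = 0}) := by
  obtain ⟨x₀, hx₀mem, hx₀2⟩ := hx
  rcases (hvD ▸ hx₀mem : x₀ ∈ D₁ ∪ D₃) with h | h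
  · exact Or.inl (main_aux D hsd hde v D₀ D₁ D₃ hD₀ h₁ h₃ hdisj hvD x₀ h hx₀2)
  · exact Or.inr (main_aux D hsd hde v D₀ D₃ D₁ hD₀ h₃ h₁ hdisj.symm
      (by rw [hvD, Set.union_comm]) x₀ h hx₀2)
end
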